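/- arXiv:2012.06762 — 6 statements merged into one kernel-verified Lean document; each statement's English description precedes it below -/
import Mathlib

section
/- Under the partially linear models E(Y|M,A,X,U)=θ1·M+θ2·A+g(X,U) and E(M|A,X,U)=θ3·A+h(X,U), together with the randomization condition A ⊥ U | X, one has E(Y−θ1·M−θ2·A | A,X) = E(g(X,U)|X) almost surely; in particular this conditional expectation does not depend on A. -/
open MeasureTheory ProbabilityTheory Set

set_option linter.unusedSectionVars false
set_option linter.unusedVariables false

section Aux

variable {Ω 𝓧 𝓤 : Type*} {mΩ : MeasurableSpace Ω} [StandardBorelSpace Ω] [Nonempty Ω]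
    {m𝓧 : MeasurableSpace 𝓧} {m𝓤 : MeasurableSpace 𝓤}
    {μ : Measure Ω} [IsProbabilityMeasure μ]
    {A : Ω → ℝ} {X : Ω → 𝓧} {U : Ω → 𝓤}

theorem myE0 (hAm : Measurable A) (hXm : Measurable X) (hUm : Measurable U)
    (hAU : CondIndepFun (MeasurableSpace.comap X m𝓧) hXm.comap_le A U μ)
    {s : Set ℝ} {t t' : Set 𝓧} {u : Set 𝓤}
    (hs : MeasurableSet s) (ht : MeasurableSet t) (ht' : MeasurableSet t')
    (hu : MeasurableSet u) :
    ∫ ω in A ⁻¹' s ∩ X ⁻¹' t, (μ⟦X ⁻¹' t' ∩ U ⁻¹' u | MeasurableSpace.comap X m𝓧⟧) ω ∂μ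
      = (μ (A ⁻¹' s ∩ X ⁻¹' t ∩ (X ⁻¹' t' ∩ U ⁻¹' u))).toReal := by
  have hmX_le : (MeasurableSpace.comap X m𝓧) ≤ mΩ := hXm.comap_le
  have hSm : MeasurableSet[mΩ] (A ⁻¹' s ∩ X ⁻¹' t) := (hAm hs).inter (hXm ht)
  have hXt' : MeasurableSet[(MeasurableSpace.comap X m𝓧)] (X ⁻¹' t') := ⟨t', ht', rfl⟩
  have hXtt' : MeasurableSet[(MeasurableSpace.comap X m𝓧)] (X ⁻¹' (t ∩ t')) := ⟨t ∩ t', ht.inter ht', rfl⟩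
  have hUu : MeasurableSet[mΩ] (U ⁻¹' u) := hUm hu
  have hAs : MeasurableSet[mΩ] (A ⁻¹' s) := hAm hs
  -- step 1 : condexp of intersection indicator pulls out the X-part
  have h1 : (μ⟦X ⁻¹' t' ∩ U ⁻¹' u | (MeasurableSpace.comap X m𝓧)⟧)
      =ᵐ[μ] (X ⁻¹' t').indicator (μ⟦U ⁻¹' u | (MeasurableSpace.comap X m𝓧)⟧) := by
    have : ((X ⁻¹' t' ∩ U ⁻¹' u).indicator (fun _ => (1:ℝ)))
        = (X ⁻¹' t').indicator ((U ⁻¹' u).indicator (fun _ => (1:ℝ))) := by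
      rw [Set.indicator_indicator]
    rw [this]
    exact condExp_indicator ((integrable_const (1:ℝ)).indicator hUu) hXt'
  rw [setIntegral_congr_ae hSm (h1.mono fun ω hω _ => hω)]
  rw [setIntegral_indicator (hmX_le _ hXt')]
  have hset : A ⁻¹' s ∩ X ⁻¹' t ∩ X ⁻¹' t' = X ⁻¹' (t ∩ t') ∩ A ⁻¹' s := by
    ext ω; simp [Set.mem_preimage]; tauto
  rw [hset]
  -- step 2 : replace integrand over the A-set by conditional expectation given X
  have h2 : ∫ ω in X ⁻¹' (t ∩ t') ∩ A ⁻¹' s, (μ⟦U ⁻¹' u | (MeasurableSpace.comap X m𝓧)⟧) ω ∂μ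
      = ∫ ω in X ⁻¹' (t ∩ t'), ((A ⁻¹' s).indicator (μ⟦U ⁻¹' u | (MeasurableSpace.comap X m𝓧)⟧)) ω ∂μ := by
    rw [setIntegral_indicator hAs]
  rw [h2]
  have hGind : Integrable ((A ⁻¹' s).indicator (μ⟦U ⁻¹' u | (MeasurableSpace.comap X m𝓧)⟧)) μ :=
    integrable_condExp.indicator hAs
  have h3 : ∫ ω in X ⁻¹' (t ∩ t'), ((A ⁻¹' s).indicator (μ⟦U ⁻¹' u | (MeasurableSpace.comap X m𝓧)⟧)) ω ∂μ
      = ∫ ω in X ⁻¹' (t ∩ t'),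
          (μ[(A ⁻¹' s).indicator (μ⟦U ⁻¹' u | (MeasurableSpace.comap X m𝓧)⟧) | (MeasurableSpace.comap X m𝓧)]) ω ∂μ :=
    (setIntegral_condExp hmX_le hGind hXtt').symm
  rw [h3]
  -- step 3 : pull-out property
  have hmul : (μ⟦U ⁻¹' u | (MeasurableSpace.comap X m𝓧)⟧) * ((A ⁻¹' s).indicator (fun _ => (1:ℝ)))
      = (A ⁻¹' s).indicator (μ⟦U ⁻¹' u | (MeasurableSpace.comap X m𝓧)⟧) := by
    funext ω
    by_cases hω : ω ∈ A ⁻¹' s <;> simp [hω, Pi.mul_apply]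
  have h4 : μ[(A ⁻¹' s).indicator (μ⟦U ⁻¹' u | (MeasurableSpace.comap X m𝓧)⟧) | (MeasurableSpace.comap X m𝓧)]
      =ᵐ[μ] (μ⟦U ⁻¹' u | (MeasurableSpace.comap X m𝓧)⟧) * (μ⟦A ⁻¹' s | (MeasurableSpace.comap X m𝓧)⟧) := by
    rw [← hmul]
    exact condExp_mul_of_stronglyMeasurable_left stronglyMeasurable_condExp
      (by rw [hmul]; exact hGind) ((integrable_const (1:ℝ)).indicator hAs)
  -- step 4 : conditional independence
  have h5 : (μ⟦A ⁻¹' s ∩ U ⁻¹' u | (MeasurableSpace.comap X m𝓧)⟧)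
      =ᵐ[μ] (μ⟦A ⁻¹' s | (MeasurableSpace.comap X m𝓧)⟧) * (μ⟦U ⁻¹' u | (MeasurableSpace.comap X m𝓧)⟧) := by
    have := (condIndepFun_iff (MeasurableSpace.comap X m𝓧) hXm.comap_le A U hAm hUm μ).mp hAU
      (A ⁻¹' s) (U ⁻¹' u) ⟨s, hs, rfl⟩ ⟨u, hu, rfl⟩
    exact this
  have h6 : (μ[(A ⁻¹' s).indicator (μ⟦U ⁻¹' u | (MeasurableSpace.comap X m𝓧)⟧) | (MeasurableSpace.comap X m𝓧)])
      =ᵐ[μ] (μ⟦A ⁻¹' s ∩ U ⁻¹' u | (MeasurableSpace.comap X m𝓧)⟧) := by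
    refine h4.trans ?_
    rw [mul_comm]
    exact h5.symm
  rw [setIntegral_congr_ae (hmX_le _ hXtt') (h6.mono fun ω hω _ => hω)]
  rw [setIntegral_condExp hmX_le ((integrable_const (1:ℝ)).indicator (hAs.inter hUu)) hXtt']
  rw [setIntegral_indicator (hAs.inter hUu)]
  have hset2 : A ⁻¹' s ∩ X ⁻¹' t ∩ (X ⁻¹' t' ∩ U ⁻¹' u)
      = X ⁻¹' (t ∩ t') ∩ (A ⁻¹' s ∩ U ⁻¹' u) := by
    ext ω; simp [Set.mem_preimage]; tauto
  rw [hset2]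
  simp [measureReal_def]

-- bridge between set integral of condexp and lintegral of the condexp kernel
theorem myBridge (hXm : Measurable X) {S C : Set Ω}
    (hS : MeasurableSet S) (hC : MeasurableSet C) :
    ∫ ω in S, (μ⟦C | MeasurableSpace.comap X m𝓧⟧) ω ∂μ
      = (∫⁻ ω in S, condExpKernel μ (MeasurableSpace.comap X m𝓧) ω C ∂μ).toReal := by
  have hmX_le : (MeasurableSpace.comap X m𝓧) ≤ mΩ := hXm.comap_le
  have hk := condExpKernel_ae_eq_condExp (μ := μ) hmX_le hC
  rw [← setIntegral_congr_ae hS (hk.mono fun ω hω _ => hω)]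
  exact integral_toReal (((Kernel.measurable_coe _ hC).mono hmX_le le_rfl).aemeasurable)
    (Filter.Eventually.of_forall fun ω => measure_lt_top _ _)

theorem myE2 (hAm : Measurable A) (hXm : Measurable X) (hUm : Measurable U)
    (hAU : CondIndepFun (MeasurableSpace.comap X m𝓧) hXm.comap_le A U μ)
    {s : Set ℝ} {t : Set 𝓧} {B : Set (𝓧 × 𝓤)}
    (hs : MeasurableSet s) (ht : MeasurableSet t) (hB : MeasurableSet B) :
    ∫ ω in A ⁻¹' s ∩ X ⁻¹' t,
        (μ⟦(fun ω' => (X ω', U ω')) ⁻¹' B | MeasurableSpace.comap X m𝓧⟧) ω ∂μ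
      = (μ (A ⁻¹' s ∩ X ⁻¹' t ∩ (fun ω' => (X ω', U ω')) ⁻¹' B)).toReal := by
  have hmX_le : (MeasurableSpace.comap X m𝓧) ≤ mΩ := hXm.comap_le
  set W : Ω → 𝓧 × 𝓤 := fun ω => (X ω, U ω) with hW
  have hWm : Measurable W := hXm.prodMk hUm
  set S : Set Ω := A ⁻¹' s ∩ X ⁻¹' t with hSdef
  have hS : MeasurableSet S := (hAm hs).inter (hXm ht)
  set κ := condExpKernel μ (MeasurableSpace.comap X m𝓧) with hκ
  -- the two finite measures on 𝓧 × 𝓤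
  set ν₁ : Measure (𝓧 × 𝓤) := (μ.restrict S).map W with hν₁
  set ν₂ : Measure (𝓧 × 𝓤) := ((μ.restrict S).bind κ).map W with hν₂
  have hbind_apply : ∀ {C : Set Ω}, MeasurableSet C →
      ((μ.restrict S).bind κ) C = ∫⁻ ω in S, κ ω C ∂μ := fun hC =>
    Measure.bind_apply hC (κ.measurable.mono hmX_le le_rfl).aemeasurable
  have hfin2 : ∀ {C : Set Ω}, MeasurableSet C → (∫⁻ ω in S, κ ω C ∂μ) ≠ ⊤ := by
    intro C hC
    refine ne_top_of_le_ne_top ?_ (lintegral_mono fun ω => prob_le_one (α := Ω) (μ := κ ω))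
    simp [lintegral_one]
  -- the key: ν₁ = ν₂
  have hext : ν₁ = ν₂ := by
    refine MeasureTheory.ext_of_generate_finite _ generateFrom_prod.symm isPiSystem_prod ?_ ?_
    · rintro c ⟨t', ht', u, hu, rfl⟩
      have hWpre : W ⁻¹' (t' ×ˢ u) = X ⁻¹' t' ∩ U ⁻¹' u := by rw [hW]; exact Set.mk_preimage_prod X U
      have hCm : MeasurableSet (X ⁻¹' t' ∩ U ⁻¹' u) := (hXm ht').inter (hUm hu)
      rw [hν₁, hν₂, Measure.map_apply hWm (ht'.prod hu), Measure.map_apply hWm (ht'.prod hu),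
        hWpre, Measure.restrict_apply hCm, hbind_apply hCm]
      have h1 := myBridge (μ := μ) hXm hS hCm
      have h2 := myE0 hAm hXm hUm hAU hs ht ht' hu
      rw [h1] at h2
      have := (ENNReal.toReal_eq_toReal_iff' (hfin2 hCm) (measure_ne_top μ _)).mp h2
      rw [Set.inter_comm]
      exact this.symm
    · rw [hν₁, hν₂, Measure.map_apply hWm MeasurableSet.univ,
        Measure.map_apply hWm MeasurableSet.univ, Set.preimage_univ,
        hbind_apply MeasurableSet.univ]
      simp [lintegral_one]
  -- conclude
  have h1 := myBridge (μ := μ) hXm hS (hWm hB)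
  rw [h1]
  have : (∫⁻ ω in S, κ ω (W ⁻¹' B) ∂μ) = μ (S ∩ W ⁻¹' B) := by
    have e1 : ν₂ B = ∫⁻ ω in S, κ ω (W ⁻¹' B) ∂μ := by
      rw [hν₂, Measure.map_apply hWm hB, hbind_apply (hWm hB)]
    have e2 : ν₁ B = μ (S ∩ W ⁻¹' B) := by
      rw [hν₁, Measure.map_apply hWm hB, Measure.restrict_apply (hWm hB),
        Set.inter_comm]
    rw [← e1, ← hext, e2]
  rw [this]

theorem myE1 (hAm : Measurable A) (hXm : Measurable X) (hUm : Measurable U)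
    (hAU : CondIndepFun (MeasurableSpace.comap X m𝓧) hXm.comap_le A U μ)
    {s : Set ℝ} {t : Set 𝓧} (hs : MeasurableSet s) (ht : MeasurableSet t) :
    ∀ ⦃f : 𝓧 × 𝓤 → ℝ⦄, Integrable f (μ.map (fun ω => (X ω, U ω))) →
    ∫ ω in A ⁻¹' s ∩ X ⁻¹' t, f (X ω, U ω) ∂μ
      = ∫ ω in A ⁻¹' s ∩ X ⁻¹' t,
          (μ[fun ω' => f (X ω', U ω') | MeasurableSpace.comap X m𝓧]) ω ∂μ := by
  have hmX_le : (MeasurableSpace.comap X m𝓧) ≤ mΩ := hXm.comap_le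
  have hWm : Measurable (fun ω => (X ω, U ω)) := hXm.prodMk hUm
  have hS : MeasurableSet (A ⁻¹' s ∩ X ⁻¹' t) := (hAm hs).inter (hXm ht)
  have hcomp_int : ∀ {g : 𝓧 × 𝓤 → ℝ}, Integrable g (μ.map (fun ω => (X ω, U ω))) →
      Integrable (fun ω => g (X ω, U ω)) μ := fun hg =>
    (integrable_map_measure hg.aestronglyMeasurable hWm.aemeasurable).mp hg
  intro f hf
  refine Integrable.induction (μ := μ.map (fun ω => (X ω, U ω)))
    (P := fun f => ∫ ω in A ⁻¹' s ∩ X ⁻¹' t, f (X ω, U ω) ∂μ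
      = ∫ ω in A ⁻¹' s ∩ X ⁻¹' t,
          (μ[fun ω' => f (X ω', U ω') | MeasurableSpace.comap X m𝓧]) ω ∂μ)
    ?_ ?_ ?_ ?_ hf
  · -- indicators
    intro c B hB hBfin
    have hcomp : (fun ω => (B.indicator (fun _ => c)) (X ω, U ω))
        = fun ω => c * ((fun ω' => (X ω', U ω')) ⁻¹' B).indicator (fun _ => (1:ℝ)) ω := by
      funext ω
      by_cases hω : (X ω, U ω) ∈ B <;>
        simp [hω, Set.indicator_of_mem, Set.indicator_of_notMem, Set.mem_preimage]
    rw [show (fun ω => (B.indicator (fun _ => c)) ((fun ω' => (X ω', U ω')) ω)) =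
      (fun ω => (B.indicator (fun _ => c)) (X ω, U ω)) from rfl]
    calc ∫ ω in A ⁻¹' s ∩ X ⁻¹' t, (B.indicator (fun _ => c)) (X ω, U ω) ∂μ
        = c * ∫ ω in A ⁻¹' s ∩ X ⁻¹' t,
            ((fun ω' => (X ω', U ω')) ⁻¹' B).indicator (fun _ => (1:ℝ)) ω ∂μ := by
          rw [← integral_const_mul]
          exact setIntegral_congr_fun hS (fun ω _ => congrFun hcomp ω)
      _ = c * ∫ ω in A ⁻¹' s ∩ X ⁻¹' t,
            (μ⟦(fun ω' => (X ω', U ω')) ⁻¹' B | MeasurableSpace.comap X m𝓧⟧) ω ∂μ := by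
          rw [myE2 hAm hXm hUm hAU hs ht hB,
            setIntegral_indicator (hWm hB), setIntegral_const]
          simp [measureReal_def]
      _ = ∫ ω in A ⁻¹' s ∩ X ⁻¹' t,
            (μ[fun ω' => (B.indicator (fun _ => c)) (X ω', U ω')
              | MeasurableSpace.comap X m𝓧]) ω ∂μ := by
          rw [← integral_const_mul]
          refine setIntegral_congr_ae hS ?_
          have h1 : (fun ω' => (B.indicator (fun _ => c)) (X ω', U ω'))
              = c • (((fun ω' => (X ω', U ω')) ⁻¹' B).indicator (fun _ => (1:ℝ))) := by
            funext ω
            by_cases hω : (X ω, U ω) ∈ B <;>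
              simp [hω, Set.indicator_of_mem, Set.indicator_of_notMem, Set.mem_preimage]
          rw [h1]
          filter_upwards [condExp_smul (m := MeasurableSpace.comap X m𝓧) (μ := μ) c
            (((fun ω' => (X ω', U ω')) ⁻¹' B).indicator (fun _ => (1:ℝ)))] with ω hω _
          rw [hω]
          simp [smul_eq_mul]
  · -- addition
    intro f g hdisj hf hg Pf Pg
    have hfW := hcomp_int hf
    have hgW := hcomp_int hg
    have hadd : (fun ω => (f + g) ((fun ω' => (X ω', U ω')) ω))
        = (fun ω => f (X ω, U ω)) + (fun ω => g (X ω, U ω)) := rfl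
    rw [hadd]
    show ∫ ω in A ⁻¹' s ∩ X ⁻¹' t, (f (X ω, U ω) + g (X ω, U ω)) ∂μ = _
    rw [integral_add hfW.integrableOn hgW.integrableOn]
    have hce : μ[(fun ω => f (X ω, U ω)) + (fun ω => g (X ω, U ω))
        | MeasurableSpace.comap X m𝓧]
        =ᵐ[μ] μ[fun ω => f (X ω, U ω) | MeasurableSpace.comap X m𝓧]
          + μ[fun ω => g (X ω, U ω) | MeasurableSpace.comap X m𝓧] :=
      condExp_add hfW hgW _
    rw [setIntegral_congr_ae hS (hce.mono fun ω hω _ => hω)]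
    rw [integral_add' integrable_condExp.integrableOn integrable_condExp.integrableOn]
    rw [Pf, Pg]
  · -- closedness in L¹
    set W : Ω → 𝓧 × 𝓤 := fun ω => (X ω, U ω) with hWdef
    have hT1 : ∀ φ ψ : (𝓧 × 𝓤) →₁[μ.map W] ℝ,
        |(∫ ω in A ⁻¹' s ∩ X ⁻¹' t, φ (W ω) ∂μ) - ∫ ω in A ⁻¹' s ∩ X ⁻¹' t, ψ (W ω) ∂μ|
          ≤ dist φ ψ := by
      intro φ ψ
      have hφ := hcomp_int (L1.integrable_coeFn φ)
      have hψ := hcomp_int (L1.integrable_coeFn ψ)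
      rw [← integral_sub hφ.integrableOn hψ.integrableOn]
      rw [L1.dist_eq_integral_dist]
      calc |∫ ω in A ⁻¹' s ∩ X ⁻¹' t, (φ (W ω) - ψ (W ω)) ∂μ|
          ≤ ∫ ω in A ⁻¹' s ∩ X ⁻¹' t, |φ (W ω) - ψ (W ω)| ∂μ := by
            simpa [Real.norm_eq_abs] using norm_integral_le_integral_norm
              (μ := μ.restrict (A ⁻¹' s ∩ X ⁻¹' t)) (f := fun ω => φ (W ω) - ψ (W ω))
        _ ≤ ∫ ω, |φ (W ω) - ψ (W ω)| ∂μ := by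
            refine setIntegral_le_integral (hφ.sub hψ).abs
              (Filter.Eventually.of_forall fun ω => abs_nonneg _)
        _ = ∫ p, dist (φ p) (ψ p) ∂(μ.map W) := by
            rw [integral_map hWm.aemeasurable]
            · simp [Real.dist_eq]
            · exact ((Lp.aestronglyMeasurable φ).sub
                (Lp.aestronglyMeasurable ψ)).norm.mono_ac (Measure.absolutelyContinuous_refl _)
    have hT2 : ∀ φ ψ : (𝓧 × 𝓤) →₁[μ.map W] ℝ,
        |(∫ ω in A ⁻¹' s ∩ X ⁻¹' t,
              (μ[fun ω' => φ (W ω') | MeasurableSpace.comap X m𝓧]) ω ∂μ)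
          - ∫ ω in A ⁻¹' s ∩ X ⁻¹' t,
              (μ[fun ω' => ψ (W ω') | MeasurableSpace.comap X m𝓧]) ω ∂μ| ≤ dist φ ψ := by
      intro φ ψ
      have hφ := hcomp_int (L1.integrable_coeFn φ)
      have hψ := hcomp_int (L1.integrable_coeFn ψ)
      rw [← integral_sub integrable_condExp.integrableOn integrable_condExp.integrableOn]
      have hsub : (fun ω => (μ[fun ω' => φ (W ω') | MeasurableSpace.comap X m𝓧]) ω
            - (μ[fun ω' => ψ (W ω') | MeasurableSpace.comap X m𝓧]) ω)
          =ᵐ[μ] μ[(fun ω' => φ (W ω')) - (fun ω' => ψ (W ω'))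
            | MeasurableSpace.comap X m𝓧] :=
        (condExp_sub hφ hψ _).symm
      rw [setIntegral_congr_ae hS (hsub.mono fun ω hω _ => hω)]
      rw [L1.dist_eq_integral_dist]
      calc |∫ ω in A ⁻¹' s ∩ X ⁻¹' t,
            (μ[(fun ω' => φ (W ω')) - (fun ω' => ψ (W ω'))
              | MeasurableSpace.comap X m𝓧]) ω ∂μ|
          ≤ ∫ ω in A ⁻¹' s ∩ X ⁻¹' t,
            |(μ[(fun ω' => φ (W ω')) - (fun ω' => ψ (W ω'))
              | MeasurableSpace.comap X m𝓧]) ω| ∂μ := by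
            simpa [Real.norm_eq_abs] using norm_integral_le_integral_norm
              (μ := μ.restrict (A ⁻¹' s ∩ X ⁻¹' t))
              (f := μ[(fun ω' => φ (W ω')) - (fun ω' => ψ (W ω'))
                | MeasurableSpace.comap X m𝓧])
        _ ≤ ∫ ω, |(μ[(fun ω' => φ (W ω')) - (fun ω' => ψ (W ω'))
              | MeasurableSpace.comap X m𝓧]) ω| ∂μ :=
            setIntegral_le_integral integrable_condExp.abs
              (Filter.Eventually.of_forall fun ω => abs_nonneg _)
        _ ≤ ∫ ω, |((fun ω' => φ (W ω')) - (fun ω' => ψ (W ω'))) ω| ∂μ :=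
            integral_abs_condExp_le _
        _ = ∫ p, dist (φ p) (ψ p) ∂(μ.map W) := by
            rw [integral_map hWm.aemeasurable]
            · simp [Real.dist_eq]
            · exact ((Lp.aestronglyMeasurable φ).sub (Lp.aestronglyMeasurable ψ)).norm
    have hc1 : Continuous fun φ : (𝓧 × 𝓤) →₁[μ.map W] ℝ =>
        ∫ ω in A ⁻¹' s ∩ X ⁻¹' t, φ (W ω) ∂μ := by
      refine (LipschitzWith.of_dist_le_mul (K := 1) fun φ ψ => ?_).continuous
      simpa [Real.dist_eq] using hT1 φ ψ
    have hc2 : Continuous fun φ : (𝓧 × 𝓤) →₁[μ.map W] ℝ =>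
        ∫ ω in A ⁻¹' s ∩ X ⁻¹' t,
          (μ[fun ω' => φ (W ω') | MeasurableSpace.comap X m𝓧]) ω ∂μ := by
      refine (LipschitzWith.of_dist_le_mul (K := 1) fun φ ψ => ?_).continuous
      simpa [Real.dist_eq] using hT2 φ ψ
    exact isClosed_eq hc1 hc2
  · -- a.e. congruence
    intro f g hfg hf Pf
    have hW : (fun ω => f (X ω, U ω)) =ᵐ[μ] (fun ω => g (X ω, U ω)) :=
      ae_eq_comp hWm.aemeasurable hfg
    calc ∫ ω in A ⁻¹' s ∩ X ⁻¹' t, g (X ω, U ω) ∂μ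
        = ∫ ω in A ⁻¹' s ∩ X ⁻¹' t, f (X ω, U ω) ∂μ :=
          setIntegral_congr_ae hS (hW.symm.mono fun ω hω _ => hω)
      _ = ∫ ω in A ⁻¹' s ∩ X ⁻¹' t,
          (μ[fun ω' => f (X ω', U ω') | MeasurableSpace.comap X m𝓧]) ω ∂μ := Pf
      _ = ∫ ω in A ⁻¹' s ∩ X ⁻¹' t,
          (μ[fun ω' => g (X ω', U ω') | MeasurableSpace.comap X m𝓧]) ω ∂μ := by
          exact setIntegral_congr_ae hS ((condExp_congr_ae hW).mono fun ω hω _ => hω)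

theorem myL (hAm : Measurable A) (hXm : Measurable X) (hUm : Measurable U)
    (hAU : CondIndepFun (MeasurableSpace.comap X m𝓧) hXm.comap_le A U μ)
    {f : 𝓧 × 𝓤 → ℝ} (hfm : Measurable f)
    (hfi : Integrable (fun ω => f (X ω, U ω)) μ) :
    μ[fun ω => f (X ω, U ω) | MeasurableSpace.comap (fun ω => (A ω, X ω)) inferInstance]
      =ᵐ[μ] μ[fun ω => f (X ω, U ω) | MeasurableSpace.comap X m𝓧] := by
  have hAXm : Measurable (fun ω => (A ω, X ω)) := hAm.prodMk hXm
  have hWm : Measurable (fun ω => (X ω, U ω)) := hXm.prodMk hUm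
  have hmAX_le : MeasurableSpace.comap (fun ω => (A ω, X ω)) inferInstance ≤ mΩ :=
    hAXm.comap_le
  have hmX_le : MeasurableSpace.comap X m𝓧 ≤ mΩ := hXm.comap_le
  have hmX_le_AX : MeasurableSpace.comap X m𝓧
      ≤ MeasurableSpace.comap (fun ω => (A ω, X ω)) inferInstance := by
    have h1 : MeasurableSpace.comap X m𝓧
        = (MeasurableSpace.comap Prod.snd m𝓧).comap (fun ω => (A ω, X ω)) := by
      rw [MeasurableSpace.comap_comp]; rfl
    rw [h1]
    exact MeasurableSpace.comap_mono (measurable_snd.comap_le)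
  have hρint : Integrable f (μ.map (fun ω => (X ω, U ω))) :=
    (integrable_map_measure hfm.aestronglyMeasurable hWm.aemeasurable).mpr hfi
  refine (ae_eq_condExp_of_forall_setIntegral_eq hmAX_le hfi
    (fun _ _ _ => integrable_condExp.integrableOn) ?_
    (StronglyMeasurable.aestronglyMeasurable (stronglyMeasurable_condExp.mono hmX_le_AX))).symm
  intro S hS _
  have h_eq : MeasurableSpace.comap (fun ω => (A ω, X ω))
        (inferInstance : MeasurableSpace (ℝ × 𝓧))
      = MeasurableSpace.generateFrom
          (Set.preimage (fun ω => (A ω, X ω)) ''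
            (Set.image2 (· ×ˢ ·) { s : Set ℝ | MeasurableSet s }
              { t : Set 𝓧 | MeasurableSet t })) := by
    conv_lhs => rw [← generateFrom_prod]
    rw [MeasurableSpace.comap_generateFrom]
  refine MeasurableSpace.induction_on_inter
    (m := MeasurableSpace.comap (fun ω => (A ω, X ω)) inferInstance)
    (C := fun S _ => ∫ x in S, (μ[fun ω => f (X ω, U ω) | MeasurableSpace.comap X m𝓧]) x ∂μ
      = ∫ x in S, f (X x, U x) ∂μ)
    h_eq (isPiSystem_prod.comap _) ?_ ?_ ?_ ?_ S hS
  · simp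
  · rintro S ⟨c, ⟨s', hs', t', ht', rfl⟩, rfl⟩
    have hpre : (fun ω => (A ω, X ω)) ⁻¹' (s' ×ˢ t') = A ⁻¹' s' ∩ X ⁻¹' t' :=
      Set.mk_preimage_prod A X
    rw [hpre]
    exact (myE1 hAm hXm hUm hAU hs' ht' hρint).symm
  · intro S hSm hC
    have hSΩ : MeasurableSet S := hmAX_le _ hSm
    have h1 := integral_add_compl hSΩ
      (integrable_condExp (μ := μ) (f := fun ω => f (X ω, U ω))
        (m := MeasurableSpace.comap X m𝓧))
    have h2 := integral_add_compl hSΩ hfi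
    have h3 : ∫ x, (μ[fun ω => f (X ω, U ω) | MeasurableSpace.comap X m𝓧]) x ∂μ
        = ∫ x, f (X x, U x) ∂μ := integral_condExp hmX_le
    linarith
  · intro g hdisj hgm hC
    rw [integral_iUnion (fun i => hmAX_le _ (hgm i)) hdisj integrable_condExp.integrableOn,
      integral_iUnion (fun i => hmAX_le _ (hgm i)) hdisj hfi.integrableOn]
    exact tsum_congr hC

end Aux

/-- Under the partially linear models and the randomization condition
`A ⊥ U | X`, one has `E(Y − θ1·M − θ2·A | A,X) = E(g(X,U)|X) =: g*(X)` a.s.;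
in particular this conditional expectation does not depend on `A`. -/
theorem stmt1 {Ω 𝓧 𝓤 : Type*} {mΩ : MeasurableSpace Ω} [StandardBorelSpace Ω] [Nonempty Ω]
    {m𝓧 : MeasurableSpace 𝓧} {m𝓤 : MeasurableSpace 𝓤}
    (μ : Measure Ω) [IsProbabilityMeasure μ]
    (Y A M : Ω → ℝ) (X : Ω → 𝓧) (U : Ω → 𝓤)
    (hYm : Measurable Y) (hAm : Measurable A) (hMm : Measurable M)
    (hXm : Measurable X) (hUm : Measurable U)
    (hY : Integrable Y μ) (hA : Integrable A μ) (hM : Integrable M μ)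
    (θ1 θ2 θ3 : ℝ) (g h : 𝓧 × 𝓤 → ℝ) (hg : Measurable g) (hh : Measurable h)
    (hgi : Integrable (fun ω => g (X ω, U ω)) μ)
    (hhi : Integrable (fun ω => h (X ω, U ω)) μ)
    (hout : μ[Y | MeasurableSpace.comap (fun ω => (M ω, A ω, X ω, U ω)) inferInstance]
        =ᵐ[μ] fun ω => θ1 * M ω + θ2 * A ω + g (X ω, U ω))
    (hmed : μ[M | MeasurableSpace.comap (fun ω => (A ω, X ω, U ω)) inferInstance]
        =ᵐ[μ] fun ω => θ3 * A ω + h (X ω, U ω))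
    (hAU : CondIndepFun (MeasurableSpace.comap X m𝓧) hXm.comap_le A U μ) :
    μ[fun ω => Y ω - θ1 * M ω - θ2 * A ω
        | MeasurableSpace.comap (fun ω => (A ω, X ω)) inferInstance]
      =ᵐ[μ] μ[fun ω => g (X ω, U ω) | MeasurableSpace.comap X m𝓧] := by

  have hQm : Measurable (fun ω => (M ω, A ω, X ω, U ω)) :=
    hMm.prodMk (hAm.prodMk (hXm.prodMk hUm))
  have hTm : Measurable (fun ω => (A ω, X ω, U ω)) := hAm.prodMk (hXm.prodMk hUm)
  have hAXm : Measurable (fun ω => (A ω, X ω)) := hAm.prodMk hXm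
  have hmM_le : MeasurableSpace.comap (fun ω => (M ω, A ω, X ω, U ω)) inferInstance ≤ mΩ :=
    hQm.comap_le
  have hmN_le : MeasurableSpace.comap (fun ω => (A ω, X ω, U ω)) inferInstance ≤ mΩ :=
    hTm.comap_le
  have hmAX_le : MeasurableSpace.comap (fun ω => (A ω, X ω)) inferInstance ≤ mΩ :=
    hAXm.comap_le
  have hmN_le_M : MeasurableSpace.comap (fun ω => (A ω, X ω, U ω)) inferInstance
      ≤ MeasurableSpace.comap (fun ω => (M ω, A ω, X ω, U ω)) inferInstance := by
    have h1 : MeasurableSpace.comap (fun ω => (A ω, X ω, U ω))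
          (inferInstance : MeasurableSpace (ℝ × 𝓧 × 𝓤))
        = (MeasurableSpace.comap Prod.snd inferInstance).comap
            (fun ω => (M ω, A ω, X ω, U ω)) := by
      rw [MeasurableSpace.comap_comp]; rfl
    rw [h1]
    exact MeasurableSpace.comap_mono measurable_snd.comap_le
  have hmAX_le_N : MeasurableSpace.comap (fun ω => (A ω, X ω)) inferInstance
      ≤ MeasurableSpace.comap (fun ω => (A ω, X ω, U ω)) inferInstance := by
    have h1 : MeasurableSpace.comap (fun ω => (A ω, X ω))
          (inferInstance : MeasurableSpace (ℝ × 𝓧))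
        = (MeasurableSpace.comap (fun p : ℝ × 𝓧 × 𝓤 => (p.1, p.2.1)) inferInstance).comap
            (fun ω => (A ω, X ω, U ω)) := by
      rw [MeasurableSpace.comap_comp]; rfl
    rw [h1]
    exact MeasurableSpace.comap_mono
      (measurable_fst.prodMk (measurable_fst.comp measurable_snd)).comap_le
  -- measurability w.r.t. the triple σ-algebra
  have hTN : Measurable[MeasurableSpace.comap (fun ω => (A ω, X ω, U ω)) inferInstance]
      (fun ω => (A ω, X ω, U ω)) := Measurable.of_comap_le le_rfl
  have hAN : Measurable[MeasurableSpace.comap (fun ω => (A ω, X ω, U ω)) inferInstance] A :=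
    measurable_fst.comp hTN
  have hXN : Measurable[MeasurableSpace.comap (fun ω => (A ω, X ω, U ω)) inferInstance] X :=
    measurable_fst.comp (measurable_snd.comp hTN)
  have hUN : Measurable[MeasurableSpace.comap (fun ω => (A ω, X ω, U ω)) inferInstance] U :=
    measurable_snd.comp (measurable_snd.comp hTN)
  have hgWN : Measurable[MeasurableSpace.comap (fun ω => (A ω, X ω, U ω)) inferInstance]
      (fun ω => g (X ω, U ω)) := hg.comp (hXN.prodMk hUN)
  -- integrability
  have hM1 : Integrable (fun ω => θ1 * M ω) μ := hM.const_mul θ1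
  have hA2 : Integrable (fun ω => θ2 * A ω) μ := hA.const_mul θ2
  have hP2i : Integrable (fun ω => θ1 * M ω + θ2 * A ω) μ := hM1.add hA2
  -- tower property for the outcome model
  have hYN : μ[Y | MeasurableSpace.comap (fun ω => (A ω, X ω, U ω)) inferInstance]
      =ᵐ[μ] μ[fun ω => θ1 * M ω + θ2 * A ω + g (X ω, U ω)
        | MeasurableSpace.comap (fun ω => (A ω, X ω, U ω)) inferInstance] :=
    (condExp_condExp_of_le hmN_le_M hmM_le).symm.trans (condExp_congr_ae hout)
  have harg : (fun ω => θ1 * M ω + θ2 * A ω + g (X ω, U ω))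
      = (fun ω => θ1 * M ω + θ2 * A ω) + (fun ω => g (X ω, U ω)) := rfl
  have hsplit : μ[fun ω => θ1 * M ω + θ2 * A ω + g (X ω, U ω)
        | MeasurableSpace.comap (fun ω => (A ω, X ω, U ω)) inferInstance]
      =ᵐ[μ] μ[fun ω => θ1 * M ω + θ2 * A ω
          | MeasurableSpace.comap (fun ω => (A ω, X ω, U ω)) inferInstance]
        + μ[fun ω => g (X ω, U ω)
          | MeasurableSpace.comap (fun ω => (A ω, X ω, U ω)) inferInstance] := by
    rw [harg]
    exact condExp_add hP2i hgi _
  have hgWeq : μ[fun ω => g (X ω, U ω)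
        | MeasurableSpace.comap (fun ω => (A ω, X ω, U ω)) inferInstance]
      = fun ω => g (X ω, U ω) :=
    condExp_of_stronglyMeasurable hmN_le hgWN.stronglyMeasurable hgi
  -- conditional expectation of the residual given (A, X, U)
  have hF0N : μ[fun ω => Y ω - θ1 * M ω - θ2 * A ω
        | MeasurableSpace.comap (fun ω => (A ω, X ω, U ω)) inferInstance]
      =ᵐ[μ] fun ω => g (X ω, U ω) := by
    have hF0eq : (fun ω => Y ω - θ1 * M ω - θ2 * A ω)
        = Y - (fun ω => θ1 * M ω + θ2 * A ω) := by
      funext ω; simp [Pi.sub_apply]; ring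
    rw [hF0eq]
    filter_upwards [condExp_sub hY hP2i
      (m := MeasurableSpace.comap (fun ω => (A ω, X ω, U ω)) inferInstance), hYN, hsplit]
      with ω h1 h2 h3
    rw [h1]
    simp only [Pi.sub_apply, Pi.add_apply] at *
    rw [h2, h3, congrFun hgWeq ω]
    ring
  -- tower down to (A, X) and apply the key lemma
  have htow2 : μ[fun ω => Y ω - θ1 * M ω - θ2 * A ω
        | MeasurableSpace.comap (fun ω => (A ω, X ω)) inferInstance]
      =ᵐ[μ] μ[fun ω => g (X ω, U ω)
        | MeasurableSpace.comap (fun ω => (A ω, X ω)) inferInstance] :=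
    (condExp_condExp_of_le hmAX_le_N hmN_le).symm.trans (condExp_congr_ae hF0N)
  exact htow2.trans (myL hAm hXm hUm hAU hg hgi)
end

section
/- Let ψ(O;θ,h*) be the 3-vector with components ψ1=Y−θ1·M−θ2·A, ψ2=(M−θ3·A−h*(X))·(Y−θ1·M), ψ3=M−θ3·A. Under the partially linear models and A ⊥ U | X, E(ψ(O;θ,h*)|A,X) = E(ψ(O;θ,h*)|X) almost surely (Lemma 2.1). -/
open MeasureTheory ProbabilityTheory

namespace Stmt4Aux

variable {Ω : Type*} {mΩ : MeasurableSpace Ω} {μ : MeasureTheory.Measure Ω}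

lemma comap_le_comap {β γ : Type*} {mβ : MeasurableSpace β} {mγ : MeasurableSpace γ}
    {f : Ω → β} {g : Ω → γ} (φ : γ → β) (hφ : Measurable φ) (hfg : ∀ ω, f ω = φ (g ω)) :
    MeasurableSpace.comap f mβ ≤ MeasurableSpace.comap g mγ := by
  have hfe : f = φ ∘ g := funext hfg
  rw [hfe, ← MeasurableSpace.comap_comp]
  exact MeasurableSpace.comap_mono hφ.comap_le

lemma comap_pair_comm {β γ : Type*} [mβ : MeasurableSpace β] [mγ : MeasurableSpace γ]
    (b : Ω → β) (v : Ω → γ) :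
    MeasurableSpace.comap (fun ω => (b ω, v ω)) inferInstance
      = MeasurableSpace.comap (fun ω => (v ω, b ω)) inferInstance := by
  apply le_antisymm
  · exact comap_le_comap Prod.swap measurable_swap (fun ω => rfl)
  · exact comap_le_comap Prod.swap measurable_swap (fun ω => rfl)

lemma measurable_in_comap {β γ : Type*} {mβ : MeasurableSpace β} {mγ : MeasurableSpace γ}
    {f : Ω → β} {g : Ω → γ} (φ : γ → β) (hφ : Measurable φ) (hfg : ∀ ω, f ω = φ (g ω)) :
    Measurable[MeasurableSpace.comap g mγ] f := by
  have hfe : f = φ ∘ g := funext hfg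
  rw [hfe]
  exact hφ.comp (Measurable.of_comap_le le_rfl)

lemma memLp_two_condexp {m : MeasurableSpace Ω} (hm : m ≤ mΩ) [IsFiniteMeasure μ]
    {f : Ω → ℝ} (hf : MemLp f 2 μ) : MemLp (μ[f|m]) 2 μ := by
  set fL := hf.toLp f with hfL
  set G := condExpL2 ℝ ℝ hm fL with hG
  letI : MeasurableSpace Ω := mΩ
  have hmem : MemLp (G : Ω → ℝ) 2 μ := by exact Lp.memLp _
  have hcond : μ[f|m] =ᵐ[μ] (G : Ω → ℝ) := by
    refine (ae_eq_condExp_of_forall_setIntegral_eq hm (hf.integrable one_le_two)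
      (fun s hs hμs => integrableOn_condExpL2_of_measure_ne_top hm hμs.ne fL)
      (fun s hs hμs => ?_) (aestronglyMeasurable_condExpL2 hm fL)).symm
    have h1 := integral_condExpL2_eq (𝕜 := ℝ) hm fL hs hμs.ne
    refine h1.trans ?_
    apply setIntegral_congr_ae
    · exact hm s hs
    · exact (MemLp.coeFn_toLp hf).mono fun x hx _ => hx
  exact hmem.ae_eq hcond.symm

lemma integrable_mul_L2 {f g : Ω → ℝ} (hf : MemLp f 2 μ) (hg : MemLp g 2 μ) :
    Integrable (fun ω => f ω * g ω) μ := by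
  have h := hg.smul (φ := f) hf (p := 2) (q := 2) (r := 1) (hpqr := ⟨by simp [ENNReal.inv_two_add_inv_two]⟩)
  rw [memLp_one_iff_integrable] at h
  exact h



variable {𝓧 β γ : Type*} {m𝓧 : MeasurableSpace 𝓧} {mβ : MeasurableSpace β} {mγ : MeasurableSpace γ}

lemma key_indicator (μ : MeasureTheory.Measure Ω) [IsProbabilityMeasure μ]
    {X : Ω → 𝓧} {B : Ω → β} {V : Ω → γ}
    (hXm : Measurable X) (hBm : Measurable B) (hVm : Measurable V)
    (hCI : ∀ s t, MeasurableSet s → MeasurableSet t →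
      (μ[((B ⁻¹' s) ∩ (V ⁻¹' t)).indicator (fun _ => (1:ℝ)) | MeasurableSpace.comap X m𝓧])
        =ᵐ[μ] fun ω => (μ[(B ⁻¹' s).indicator (fun _ => (1:ℝ)) | MeasurableSpace.comap X m𝓧]) ω
          * (μ[(V ⁻¹' t).indicator (fun _ => (1:ℝ)) | MeasurableSpace.comap X m𝓧]) ω)
    {s : Set β} (hs : MeasurableSet s) :
    μ[(B ⁻¹' s).indicator (fun _ => (1:ℝ)) |
        MeasurableSpace.comap (fun ω => (X ω, V ω)) inferInstance]
      =ᵐ[μ] μ[(B ⁻¹' s).indicator (fun _ => (1:ℝ)) | MeasurableSpace.comap X m𝓧] := by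
  set mX := MeasurableSpace.comap X m𝓧 with hmXdef
  set mXV := MeasurableSpace.comap (fun ω => (X ω, V ω))
    (inferInstance : MeasurableSpace (𝓧 × γ)) with hmXVdef
  letI : MeasurableSpace Ω := mΩ
  have hmX : mX ≤ mΩ := hXm.comap_le
  have hmXV : mXV ≤ mΩ := (hXm.prodMk hVm).comap_le
  have hmX_le : mX ≤ mXV := comap_le_comap Prod.fst measurable_fst (fun ω => rfl)
  set f := (B ⁻¹' s).indicator (fun _ => (1:ℝ)) with hfdef
  have hf_int : Integrable f μ := (integrable_const (1:ℝ)).indicator (hBm hs)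
  set q := μ[f|mX] with hqdef
  have key : ∀ t : Set Ω, MeasurableSet[mXV] t →
      ∫ x in t, q x ∂μ = ∫ x in t, f x ∂μ := by
    have hgen : mXV = MeasurableSpace.generateFrom
        (Set.preimage (fun ω => (X ω, V ω)) ''
          (Set.image2 (· ×ˢ ·) {u : Set 𝓧 | MeasurableSet u} {u : Set γ | MeasurableSet u})) := by
      rw [hmXVdef, ← MeasurableSpace.comap_generateFrom]
      congr 1
      exact generateFrom_prod.symm
    refine MeasurableSpace.induction_on_inter (m := mXV) hgen
      (isPiSystem_prod.comap _) (by simp) ?_ ?_ ?_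
    · -- basic rectangles
      rintro t ⟨t', ⟨s₂, hs₂, u, hu, rfl⟩, rfl⟩
      simp only [Set.mem_setOf_eq] at hs₂ hu
      rw [Set.mk_preimage_prod]
      set indV := (V ⁻¹' u).indicator (fun _ => (1:ℝ)) with hindVdef
      set r := μ[indV|mX] with hrdef
      have hXs₂ : MeasurableSet[mX] (X ⁻¹' s₂) := ⟨s₂, hs₂, rfl⟩
      have hXs₂' : MeasurableSet (X ⁻¹' s₂) := hmX _ hXs₂
      have hVu : MeasurableSet (V ⁻¹' u) := hVm hu
      have hindV_int : Integrable indV μ := (integrable_const (1:ℝ)).indicator hVu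
      have hindV_bd : ∀ x, ‖indV x‖ ≤ 1 := by
        intro x
        by_cases hx : x ∈ V ⁻¹' u <;> simp [hindVdef, Set.indicator_apply, hx]
      have hptw : ∀ k : Ω → ℝ, (V ⁻¹' u).indicator k = fun x => indV x * k x := by
        intro k; funext x
        by_cases hx : x ∈ V ⁻¹' u <;> simp [hindVdef, Set.indicator_apply, hx]
      have hprod_int : Integrable (fun x => indV x * q x) μ :=
        integrable_condExp.bdd_mul (hindV_int.aestronglyMeasurable)
          (Filter.Eventually.of_forall hindV_bd)
      have h0 : (fun x => indV x * q x) =ᵐ[μ] q * indV :=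
        Filter.Eventually.of_forall (fun x => mul_comm _ _)
      have hcm : (μ[fun x => indV x * q x|mX]) =ᵐ[μ] fun x => q x * r x := by
        refine (condExp_congr_ae h0).trans ?_
        exact condExp_mul_of_stronglyMeasurable_left stronglyMeasurable_condExp
          ((integrable_congr h0).mp hprod_int) hindV_int
      have hLHS : ∫ x in X ⁻¹' s₂ ∩ V ⁻¹' u, q x ∂μ
          = ∫ x in X ⁻¹' s₂, q x * r x ∂μ := by
        rw [← setIntegral_indicator hVu, hptw q,
          ← setIntegral_condExp hmX hprod_int hXs₂]
        exact setIntegral_congr_ae hXs₂' (hcm.mono fun x hx _ => hx)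
      have hBV_int : Integrable ((B ⁻¹' s ∩ V ⁻¹' u).indicator (fun _ => (1:ℝ))) μ :=
        (integrable_const (1:ℝ)).indicator ((hBm hs).inter hVu)
      have hRHS : ∫ x in X ⁻¹' s₂ ∩ V ⁻¹' u, f x ∂μ
          = ∫ x in X ⁻¹' s₂, q x * r x ∂μ := by
        rw [← setIntegral_indicator hVu, hfdef, Set.indicator_indicator, Set.inter_comm,
          ← setIntegral_condExp hmX hBV_int hXs₂]
        exact setIntegral_congr_ae hXs₂' ((hCI s u hs hu).mono fun x hx _ => hx)
      rw [hLHS, hRHS]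
    · -- complement
      intro t htm hC
      have h1 : ∫ x in t, q x ∂μ + ∫ x in tᶜ, q x ∂μ = ∫ x, q x ∂μ :=
        integral_add_compl (hmXV _ htm) integrable_condExp
      have h2 : ∫ x in t, f x ∂μ + ∫ x in tᶜ, f x ∂μ = ∫ x, f x ∂μ :=
        integral_add_compl (hmXV _ htm) hf_int
      have htot : ∫ x, q x ∂μ = ∫ x, f x ∂μ := integral_condExp hmX
      linarith
    · -- disjoint union
      intro g hdisj hgm hC
      rw [integral_iUnion (fun i => hmXV _ (hgm i)) hdisj integrable_condExp.integrableOn,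
        integral_iUnion (fun i => hmXV _ (hgm i)) hdisj hf_int.integrableOn]
      exact tsum_congr hC
  refine (ae_eq_condExp_of_forall_setIntegral_eq hmXV hf_int
    (fun t _ _ => integrable_condExp.integrableOn) (fun t ht _ => key t ht)
    ((stronglyMeasurable_condExp.mono hmX_le).aestronglyMeasurable)).symm

lemma condExp_pair_eq (μ : MeasureTheory.Measure Ω) [IsProbabilityMeasure μ]
    {X : Ω → 𝓧} {B : Ω → β} {V : Ω → γ}
    (hXm : Measurable X) (hBm : Measurable B) (hVm : Measurable V)
    (hCI : ∀ s t, MeasurableSet s → MeasurableSet t →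
      (μ[((B ⁻¹' s) ∩ (V ⁻¹' t)).indicator (fun _ => (1:ℝ)) | MeasurableSpace.comap X m𝓧])
        =ᵐ[μ] fun ω => (μ[(B ⁻¹' s).indicator (fun _ => (1:ℝ)) | MeasurableSpace.comap X m𝓧]) ω
          * (μ[(V ⁻¹' t).indicator (fun _ => (1:ℝ)) | MeasurableSpace.comap X m𝓧]) ω)
    {f : Ω → ℝ} (hf_int : Integrable f μ)
    (hfm : AEStronglyMeasurable[
      (MeasurableSpace.comap (fun ω => (X ω, V ω)) inferInstance)] f μ) :
    μ[f | MeasurableSpace.comap (fun ω => (X ω, B ω)) inferInstance]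
      =ᵐ[μ] μ[f | MeasurableSpace.comap X m𝓧] := by
  set mX := MeasurableSpace.comap X m𝓧 with hmXdef
  set mXV := MeasurableSpace.comap (fun ω => (X ω, V ω))
    (inferInstance : MeasurableSpace (𝓧 × γ)) with hmXVdef
  set mXB := MeasurableSpace.comap (fun ω => (X ω, B ω))
    (inferInstance : MeasurableSpace (𝓧 × β)) with hmXBdef
  letI : MeasurableSpace Ω := mΩ
  have hmX : mX ≤ mΩ := hXm.comap_le
  have hmXV : mXV ≤ mΩ := (hXm.prodMk hVm).comap_le
  have hmXB : mXB ≤ mΩ := (hXm.prodMk hBm).comap_le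
  have hmX_le : mX ≤ mXV := comap_le_comap Prod.fst measurable_fst (fun ω => rfl)
  have hmX_leB : mX ≤ mXB := comap_le_comap Prod.fst measurable_fst (fun ω => rfl)
  have key : ∀ t : Set Ω, MeasurableSet[mXB] t →
      ∫ x in t, (μ[f|mX]) x ∂μ = ∫ x in t, f x ∂μ := by
    have hgen : mXB = MeasurableSpace.generateFrom
        (Set.preimage (fun ω => (X ω, B ω)) ''
          (Set.image2 (· ×ˢ ·) {u : Set 𝓧 | MeasurableSet u} {u : Set β | MeasurableSet u})) := by
      rw [hmXBdef, ← MeasurableSpace.comap_generateFrom]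
      congr 1
      exact generateFrom_prod.symm
    refine MeasurableSpace.induction_on_inter (m := mXB) hgen
      (isPiSystem_prod.comap _) (by simp) ?_ ?_ ?_
    · -- basic rectangles
      rintro t ⟨t', ⟨s₂, hs₂, s₁, hs₁, rfl⟩, rfl⟩
      simp only [Set.mem_setOf_eq] at hs₂ hs₁
      rw [Set.mk_preimage_prod]
      set indB := (B ⁻¹' s₁).indicator (fun _ => (1:ℝ)) with hindBdef
      set q := μ[indB|mX] with hqdef
      have hXs₂ : MeasurableSet[mX] (X ⁻¹' s₂) := ⟨s₂, hs₂, rfl⟩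
      have hXs₂' : MeasurableSet (X ⁻¹' s₂) := hmX _ hXs₂
      have hXs₂V : MeasurableSet[mXV] (X ⁻¹' s₂) := hmX_le _ hXs₂
      have hBs₁ : MeasurableSet (B ⁻¹' s₁) := hBm hs₁
      have hindB_int : Integrable indB μ := (integrable_const (1:ℝ)).indicator hBs₁
      have hindB_bd : ∀ x, ‖indB x‖ ≤ 1 := by
        intro x
        by_cases hx : x ∈ B ⁻¹' s₁ <;> simp [hindBdef, Set.indicator_apply, hx]
      have hptwB : ∀ k : Ω → ℝ, (B ⁻¹' s₁).indicator k = fun x => indB x * k x := by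
        intro k; funext x
        by_cases hx : x ∈ B ⁻¹' s₁ <;> simp [hindBdef, Set.indicator_apply, hx]
      have hq_sm : StronglyMeasurable[mX] q := stronglyMeasurable_condExp
      have hq_bd : ∀ᵐ x ∂μ, ‖q x‖ ≤ 1 := by
        have h0 : 0 ≤ᵐ[μ] q := condExp_nonneg
          (Filter.Eventually.of_forall fun x =>
            Set.indicator_nonneg (fun _ _ => zero_le_one) x)
        have h1 : q ≤ᵐ[μ] μ[(fun _ => (1:ℝ))|mX] := condExp_mono hindB_int
          (integrable_const (1:ℝ))
          (Filter.Eventually.of_forall fun x => by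
            by_cases hx : x ∈ B ⁻¹' s₁ <;> simp [hindBdef, Set.indicator_apply, hx])
        have h2 : μ[(fun _ => (1:ℝ))|mX] = fun _ => (1:ℝ) := condExp_const hmX (1:ℝ)
        filter_upwards [h0, h1] with x hx0 hx1
        rw [h2] at hx1
        simp only [Pi.zero_apply] at hx0
        rw [Real.norm_eq_abs, abs_le]
        exact ⟨by linarith, by simpa using hx1⟩
      have hq_meas : AEStronglyMeasurable q μ :=
        ((hq_sm.mono hmX).aestronglyMeasurable)
      have hqf_int : Integrable (fun x => q x * f x) μ :=
        hf_int.bdd_mul hq_meas hq_bd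
      have hint1 : Integrable (fun x => indB x * (μ[f|mX]) x) μ :=
        integrable_condExp.bdd_mul hindB_int.aestronglyMeasurable
          (Filter.Eventually.of_forall hindB_bd)
      -- LHS
      have hLHS : ∫ x in X ⁻¹' s₂ ∩ B ⁻¹' s₁, (μ[f|mX]) x ∂μ
          = ∫ x in X ⁻¹' s₂, q x * f x ∂μ := by
        have e1 : (μ[fun x => indB x * (μ[f|mX]) x|mX]) =ᵐ[μ] fun x => (μ[f|mX]) x * q x := by
          have h0 : (fun x => indB x * (μ[f|mX]) x) =ᵐ[μ] (μ[f|mX]) * indB :=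
            Filter.Eventually.of_forall (fun x => mul_comm _ _)
          refine (condExp_congr_ae h0).trans ?_
          exact condExp_mul_of_stronglyMeasurable_left stronglyMeasurable_condExp
            ((integrable_congr h0).mp hint1) hindB_int
        have e2 : (μ[fun x => q x * f x|mX]) =ᵐ[μ] fun x => (μ[f|mX]) x * q x := by
          refine (condExp_mul_of_stronglyMeasurable_left hq_sm hqf_int hf_int).trans ?_
          exact Filter.Eventually.of_forall (fun x => mul_comm _ _)
        calc ∫ x in X ⁻¹' s₂ ∩ B ⁻¹' s₁, (μ[f|mX]) x ∂μ
            = ∫ x in X ⁻¹' s₂, (B ⁻¹' s₁).indicator (μ[f|mX]) x ∂μ :=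
              (setIntegral_indicator hBs₁).symm
          _ = ∫ x in X ⁻¹' s₂, indB x * (μ[f|mX]) x ∂μ := by rw [hptwB]
          _ = ∫ x in X ⁻¹' s₂, (μ[fun x => indB x * (μ[f|mX]) x|mX]) x ∂μ :=
              (setIntegral_condExp hmX hint1 hXs₂).symm
          _ = ∫ x in X ⁻¹' s₂, (μ[f|mX]) x * q x ∂μ :=
              setIntegral_congr_ae hXs₂' (e1.mono fun x hx _ => hx)
          _ = ∫ x in X ⁻¹' s₂, (μ[fun x => q x * f x|mX]) x ∂μ :=
              (setIntegral_congr_ae hXs₂' (e2.mono fun x hx _ => hx)).symm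
          _ = ∫ x in X ⁻¹' s₂, q x * f x ∂μ := setIntegral_condExp hmX hqf_int hXs₂
      -- RHS
      set w := fun x => indB x - q x with hwdef
      have hw_int : Integrable w μ := hindB_int.sub integrable_condExp
      have hw_meas : AEStronglyMeasurable w μ :=
        hindB_int.aestronglyMeasurable.sub hq_meas
      have hw_bd : ∀ᵐ x ∂μ, ‖w x‖ ≤ 2 := by
        filter_upwards [hq_bd] with x hx
        calc ‖indB x - q x‖ ≤ ‖indB x‖ + ‖q x‖ := norm_sub_le _ _
          _ ≤ 1 + 1 := add_le_add (hindB_bd x) hx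
          _ = 2 := by norm_num
      have hwf_int : Integrable (fun x => w x * f x) μ := hf_int.bdd_mul hw_meas hw_bd
      have hfw_int : Integrable (fun x => f x * w x) μ := by
        refine (integrable_congr ?_).mp hwf_int
        exact Filter.Eventually.of_forall (fun x => mul_comm _ _)
      have hcondw : (μ[w|mXV]) =ᵐ[μ] 0 := by
        have hKB : (μ[indB|mXV]) =ᵐ[μ] q := key_indicator μ hXm hBm hVm hCI hs₁
        have hqV : (μ[q|mXV]) = q :=
          condExp_of_stronglyMeasurable hmXV (hq_sm.mono hmX_le) integrable_condExp
        have hsub : (μ[w|mXV]) =ᵐ[μ] μ[indB|mXV] - μ[q|mXV] :=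
          condExp_sub hindB_int integrable_condExp mXV
        filter_upwards [hKB, hsub] with x h1 h3
        simp only [Pi.sub_apply] at h3
        rw [hqV] at h3
        simp [h3, h1]
      have hcondfw : (μ[fun x => f x * w x|mXV]) =ᵐ[μ] 0 := by
        have hpull : (μ[fun x => f x * w x|mXV]) =ᵐ[μ] f * μ[w|mXV] :=
          condExp_mul_of_aestronglyMeasurable_left hfm hfw_int hw_int
        filter_upwards [hpull, hcondw] with x h1 h2
        rw [h1]
        simp only [Pi.mul_apply]
        rw [h2]
        simp
      have hzero : ∫ x in X ⁻¹' s₂, f x * w x ∂μ = 0 := by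
        rw [← setIntegral_condExp hmXV hfw_int hXs₂V]
        have hz : ∫ x in X ⁻¹' s₂, (μ[fun x => f x * w x|mXV]) x ∂μ
            = ∫ x in X ⁻¹' s₂, (0:ℝ) ∂μ :=
          setIntegral_congr_ae (hmXV _ hXs₂V)
            (hcondfw.mono fun x hx _ => by simpa using hx)
        rw [hz]
        simp
      have hRHS : ∫ x in X ⁻¹' s₂ ∩ B ⁻¹' s₁, f x ∂μ
          = ∫ x in X ⁻¹' s₂, q x * f x ∂μ := by
        calc ∫ x in X ⁻¹' s₂ ∩ B ⁻¹' s₁, f x ∂μ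
            = ∫ x in X ⁻¹' s₂, (B ⁻¹' s₁).indicator f x ∂μ :=
              (setIntegral_indicator hBs₁).symm
          _ = ∫ x in X ⁻¹' s₂, indB x * f x ∂μ := by rw [hptwB]
          _ = ∫ x in X ⁻¹' s₂, (f x * w x + q x * f x) ∂μ := by
              apply setIntegral_congr_ae hXs₂'
              refine Filter.Eventually.of_forall (fun x _ => ?_)
              simp only [hwdef]
              ring
          _ = ∫ x in X ⁻¹' s₂, f x * w x ∂μ + ∫ x in X ⁻¹' s₂, q x * f x ∂μ :=
              integral_add hfw_int.integrableOn hqf_int.integrableOn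
          _ = ∫ x in X ⁻¹' s₂, q x * f x ∂μ := by rw [hzero, zero_add]
      rw [hLHS, hRHS]
    · -- complement
      intro t htm hC
      have h1 : ∫ x in t, (μ[f|mX]) x ∂μ + ∫ x in tᶜ, (μ[f|mX]) x ∂μ
          = ∫ x, (μ[f|mX]) x ∂μ :=
        integral_add_compl (hmXB _ htm) integrable_condExp
      have h2 : ∫ x in t, f x ∂μ + ∫ x in tᶜ, f x ∂μ = ∫ x, f x ∂μ :=
        integral_add_compl (hmXB _ htm) hf_int
      have htot : ∫ x, (μ[f|mX]) x ∂μ = ∫ x, f x ∂μ := integral_condExp hmX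
      linarith
    · -- disjoint union
      intro g hdisj hgm hC
      rw [integral_iUnion (fun i => hmXB _ (hgm i)) hdisj integrable_condExp.integrableOn,
        integral_iUnion (fun i => hmXB _ (hgm i)) hdisj hf_int.integrableOn]
      exact tsum_congr hC
  refine (ae_eq_condExp_of_forall_setIntegral_eq hmXB hf_int
    (fun t _ _ => integrable_condExp.integrableOn) (fun t ht _ => key t ht)
    ((stronglyMeasurable_condExp.mono hmX_leB).aestronglyMeasurable)).symm

end Stmt4Aux


open Stmt4Aux in
/-- Lemma 2.1: with `ψ1 = Y − θ1·M − θ2·A`,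
`ψ2 = (M − θ3·A − h*(X))·(Y − θ1·M)`, `ψ3 = M − θ3·A`, under the partially linear
models and `A ⊥ U | X`, `E(ψ|A,X) = E(ψ|X)` almost surely. -/
theorem stmt4 {Ω 𝓧 𝓤 : Type*} {mΩ : MeasurableSpace Ω} [StandardBorelSpace Ω] [Nonempty Ω]
    {m𝓧 : MeasurableSpace 𝓧} {m𝓤 : MeasurableSpace 𝓤}
    (μ : Measure Ω) [IsProbabilityMeasure μ]
    (Y A M : Ω → ℝ) (X : Ω → 𝓧) (U : Ω → 𝓤)
    (hYm : Measurable Y) (hAm : Measurable A) (hMm : Measurable M)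
    (hXm : Measurable X) (hUm : Measurable U)
    (hY : MemLp Y 2 μ) (hA : MemLp A 2 μ) (hM : MemLp M 2 μ)
    (θ1 θ2 θ3 : ℝ) (g h : 𝓧 × 𝓤 → ℝ) (hg : Measurable g) (hh : Measurable h)
    (hgi : MemLp (fun ω => g (X ω, U ω)) 2 μ)
    (hhi : MemLp (fun ω => h (X ω, U ω)) 2 μ)
    (hout : μ[Y | MeasurableSpace.comap (fun ω => (M ω, A ω, X ω, U ω)) inferInstance]
        =ᵐ[μ] fun ω => θ1 * M ω + θ2 * A ω + g (X ω, U ω))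
    (hmed : μ[M | MeasurableSpace.comap (fun ω => (A ω, X ω, U ω)) inferInstance]
        =ᵐ[μ] fun ω => θ3 * A ω + h (X ω, U ω))
    (hAU : CondIndepFun (MeasurableSpace.comap X m𝓧) hXm.comap_le A U μ)
    (hstar : Ω → ℝ)
    (hhstar : hstar =ᵐ[μ] μ[fun ω => h (X ω, U ω) | MeasurableSpace.comap X m𝓧]) :
    (μ[fun ω => Y ω - θ1 * M ω - θ2 * A ω
        | MeasurableSpace.comap (fun ω => (A ω, X ω)) inferInstance]
      =ᵐ[μ] μ[fun ω => Y ω - θ1 * M ω - θ2 * A ω | MeasurableSpace.comap X m𝓧])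
    ∧ (μ[fun ω => (M ω - θ3 * A ω - hstar ω) * (Y ω - θ1 * M ω)
        | MeasurableSpace.comap (fun ω => (A ω, X ω)) inferInstance]
      =ᵐ[μ] μ[fun ω => (M ω - θ3 * A ω - hstar ω) * (Y ω - θ1 * M ω)
        | MeasurableSpace.comap X m𝓧])
    ∧ (μ[fun ω => M ω - θ3 * A ω
        | MeasurableSpace.comap (fun ω => (A ω, X ω)) inferInstance]
      =ᵐ[μ] μ[fun ω => M ω - θ3 * A ω | MeasurableSpace.comap X m𝓧]) := by
  set mX := MeasurableSpace.comap X m𝓧 with hmXdef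
  set mAX := MeasurableSpace.comap (fun ω => (A ω, X ω))
    (inferInstance : MeasurableSpace (ℝ × 𝓧)) with hmAXdef
  set mXA := MeasurableSpace.comap (fun ω => (X ω, A ω))
    (inferInstance : MeasurableSpace (𝓧 × ℝ)) with hmXAdef
  set mXU := MeasurableSpace.comap (fun ω => (X ω, U ω))
    (inferInstance : MeasurableSpace (𝓧 × 𝓤)) with hmXUdef
  set mAXU := MeasurableSpace.comap (fun ω => (A ω, X ω, U ω))
    (inferInstance : MeasurableSpace (ℝ × 𝓧 × 𝓤)) with hmAXUdef
  set mMAXU := MeasurableSpace.comap (fun ω => (M ω, A ω, X ω, U ω))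
    (inferInstance : MeasurableSpace (ℝ × ℝ × 𝓧 × 𝓤)) with hmMAXUdef
  letI : MeasurableSpace Ω := mΩ
  have eAX : mAX = mXA := comap_pair_comm A X
  -- inclusions of σ-algebras
  have hmX : mX ≤ mΩ := hXm.comap_le
  have hmAX : mAX ≤ mΩ := (hAm.prodMk hXm).comap_le
  have hmXU : mXU ≤ mΩ := (hXm.prodMk hUm).comap_le
  have hmAXU : mAXU ≤ mΩ := (hAm.prodMk (hXm.prodMk hUm)).comap_le
  have hmMAXU : mMAXU ≤ mΩ := (hMm.prodMk (hAm.prodMk (hXm.prodMk hUm))).comap_le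
  have hAX_le_MAXU : mAX ≤ mMAXU :=
    comap_le_comap (fun p : ℝ × ℝ × 𝓧 × 𝓤 => (p.2.1, p.2.2.1))
      ((measurable_fst.comp measurable_snd).prodMk
        ((measurable_fst.comp measurable_snd).comp measurable_snd)) (fun ω => rfl)
  have hAX_le_AXU : mAX ≤ mAXU :=
    comap_le_comap (fun p : ℝ × 𝓧 × 𝓤 => (p.1, p.2.1))
      (measurable_fst.prodMk (measurable_fst.comp measurable_snd)) (fun ω => rfl)
  have hX_le_MAXU : mX ≤ mMAXU :=
    comap_le_comap (fun p : ℝ × ℝ × 𝓧 × 𝓤 => p.2.2.1)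
      (measurable_fst.comp (measurable_snd.comp measurable_snd)) (fun ω => rfl)
  have hX_le_AXU : mX ≤ mAXU :=
    comap_le_comap (fun p : ℝ × 𝓧 × 𝓤 => p.2.1)
      (measurable_fst.comp measurable_snd) (fun ω => rfl)
  have hX_le_XU : mX ≤ mXU := comap_le_comap Prod.fst measurable_fst (fun ω => rfl)
  have hX_le_AX : mX ≤ mAX := comap_le_comap Prod.snd measurable_snd (fun ω => rfl)
  -- conditional independence, set form
  have hCI := (condIndepFun_iff_condExp_inter_preimage_eq_mul (μ := μ)
    (hm' := hXm.comap_le) hAm hUm).mp hAU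
  have hCI' : ∀ s t, MeasurableSet s → MeasurableSet t →
      (μ[((U ⁻¹' s) ∩ (A ⁻¹' t)).indicator (fun _ => (1:ℝ)) | mX])
        =ᵐ[μ] fun ω => (μ[(U ⁻¹' s).indicator (fun _ => (1:ℝ)) | mX]) ω
          * (μ[(A ⁻¹' t).indicator (fun _ => (1:ℝ)) | mX]) ω := by
    intro s t hs ht
    have h1 := hCI t s ht hs
    rw [Set.inter_comm] at h1
    exact h1.trans (Filter.Eventually.of_forall fun ω => mul_comm _ _)
  -- the two instances of the master lemma
  have F1 : ∀ {f : Ω → ℝ}, Integrable f μ → AEStronglyMeasurable[mXU] f μ →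
      μ[f|mAX] =ᵐ[μ] μ[f|mX] := by
    intro f hfi hfmeas
    have h1 := condExp_pair_eq μ hXm hAm hUm hCI hfi hfmeas
    rw [eAX]
    exact h1
  have F1' : ∀ {f : Ω → ℝ}, Integrable f μ → AEStronglyMeasurable[mXA] f μ →
      μ[f|mXU] =ᵐ[μ] μ[f|mX] := fun hfi hfmeas =>
    condExp_pair_eq μ hXm hUm hAm hCI' hfi hfmeas
  -- basic functions and their properties
  set g0 := fun ω => g (X ω, U ω) with hg0def
  set h0 := fun ω => h (X ω, U ω) with hh0def
  have hYi : Integrable Y μ := hY.integrable one_le_two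
  have hAi : Integrable A μ := hA.integrable one_le_two
  have hMi : Integrable M μ := hM.integrable one_le_two
  have hg0i : Integrable g0 μ := hgi.integrable one_le_two
  have hh0i : Integrable h0 μ := hhi.integrable one_le_two
  have hg0_mXU : Measurable[mXU] g0 := measurable_in_comap g hg (fun ω => rfl)
  have hh0_mXU : Measurable[mXU] h0 := measurable_in_comap h hh (fun ω => rfl)
  have hg0_mAXU : Measurable[mAXU] g0 :=
    measurable_in_comap (fun p : ℝ × 𝓧 × 𝓤 => g (p.2.1, p.2.2))
      (hg.comp ((measurable_fst.comp measurable_snd).prodMk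
        (measurable_snd.comp measurable_snd))) (fun ω => rfl)
  have hh0_mAXU : Measurable[mAXU] h0 :=
    measurable_in_comap (fun p : ℝ × 𝓧 × 𝓤 => h (p.2.1, p.2.2))
      (hh.comp ((measurable_fst.comp measurable_snd).prodMk
        (measurable_snd.comp measurable_snd))) (fun ω => rfl)
  have hM_mMAXU : Measurable[mMAXU] M :=
    measurable_in_comap Prod.fst measurable_fst (fun ω => rfl)
  have hA_mMAXU : Measurable[mMAXU] A :=
    measurable_in_comap (fun p : ℝ × ℝ × 𝓧 × 𝓤 => p.2.1)
      (measurable_fst.comp measurable_snd) (fun ω => rfl)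
  have hA_mAXU : Measurable[mAXU] A :=
    measurable_in_comap Prod.fst measurable_fst (fun ω => rfl)
  have hA_mAX : Measurable[mAX] A :=
    measurable_in_comap Prod.fst measurable_fst (fun ω => rfl)
  have hA_mXA : Measurable[mXA] A :=
    measurable_in_comap Prod.snd measurable_snd (fun ω => rfl)
  -- H = E[h0|X]
  set H := μ[h0|mX] with hHdef
  have hH2 : MemLp H 2 μ := memLp_two_condexp hmX hhi
  have hHi : Integrable H μ := integrable_condExp
  have hH_sm : StronglyMeasurable[mX] H := stronglyMeasurable_condExp
  -- E[h0|A,X] = H and E[h0|X] = H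
  have hh0AX : μ[h0|mAX] =ᵐ[μ] H :=
    F1 hh0i (hh0_mXU.stronglyMeasurable.aestronglyMeasurable)
  refine ⟨?_, ?_, ?_⟩
  · -- ψ1
    have e1 : μ[fun ω => Y ω - θ1 * M ω - θ2 * A ω|mMAXU] =ᵐ[μ] g0 := by
      have s1 : μ[fun ω => Y ω - θ1 * M ω - θ2 * A ω|mMAXU]
          =ᵐ[μ] μ[fun ω => Y ω - θ1 * M ω|mMAXU] - μ[fun ω => θ2 * A ω|mMAXU] :=
        condExp_sub (hYi.sub (hMi.const_mul θ1)) (hAi.const_mul θ2) mMAXU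
      have s2 : μ[fun ω => Y ω - θ1 * M ω|mMAXU]
          =ᵐ[μ] μ[Y|mMAXU] - μ[fun ω => θ1 * M ω|mMAXU] :=
        condExp_sub hYi (hMi.const_mul θ1) mMAXU
      have s3 : μ[fun ω => θ1 * M ω|mMAXU] = fun ω => θ1 * M ω :=
        condExp_of_stronglyMeasurable hmMAXU
          ((hM_mMAXU.const_mul θ1).stronglyMeasurable) (hMi.const_mul θ1)
      have s4 : μ[fun ω => θ2 * A ω|mMAXU] = fun ω => θ2 * A ω :=
        condExp_of_stronglyMeasurable hmMAXU
          ((hA_mMAXU.const_mul θ2).stronglyMeasurable) (hAi.const_mul θ2)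
      filter_upwards [s1, s2, hout] with ω k1 k2 k3
      simp only [Pi.sub_apply] at k1 k2
      rw [k1, k2, s3, s4, k3]
      ring
    have c1 : μ[fun ω => Y ω - θ1 * M ω - θ2 * A ω|mAX] =ᵐ[μ] μ[g0|mAX] :=
      (condExp_condExp_of_le hAX_le_MAXU hmMAXU).symm.trans (condExp_congr_ae e1)
    have c2 : μ[fun ω => Y ω - θ1 * M ω - θ2 * A ω|mX] =ᵐ[μ] μ[g0|mX] :=
      (condExp_condExp_of_le hX_le_MAXU hmMAXU).symm.trans (condExp_congr_ae e1)
    have c3 : μ[g0|mAX] =ᵐ[μ] μ[g0|mX] :=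
      F1 hg0i (hg0_mXU.stronglyMeasurable.aestronglyMeasurable)
    exact (c1.trans c3).trans c2.symm
  · -- ψ2
    set W := fun ω => Y ω - θ1 * M ω with hWdef
    set D := fun ω => M ω - θ3 * A ω - H ω with hDdef
    set C := fun ω => θ2 * A ω + g0 ω with hCdef
    set k := fun ω => h0 ω - H ω with hkdef
    have hW2 : MemLp W 2 μ := hY.sub (hM.const_mul θ1)
    have hD2 : MemLp D 2 μ := (hM.sub (hA.const_mul θ3)).sub hH2
    have hC2 : MemLp C 2 μ := (hA.const_mul θ2).add hgi
    have hk2 : MemLp k 2 μ := hhi.sub hH2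
    have hki : Integrable k μ := hk2.integrable one_le_two
    have hDW_int : Integrable (fun ω => D ω * W ω) μ := integrable_mul_L2 hD2 hW2
    have hCD_int : Integrable (fun ω => C ω * D ω) μ := integrable_mul_L2 hC2 hD2
    have hAk_int : Integrable (fun ω => (θ2 * A ω) * k ω) μ :=
      integrable_mul_L2 (hA.const_mul θ2) hk2
    have hgk_int : Integrable (fun ω => g0 ω * k ω) μ := integrable_mul_L2 hgi hk2
    have hψ2_eq : (fun ω => (M ω - θ3 * A ω - hstar ω) * (Y ω - θ1 * M ω))
        =ᵐ[μ] fun ω => D ω * W ω := by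
      filter_upwards [hhstar] with ω hω
      rw [hDdef, hWdef]
      rw [hω]
    -- strong measurability
    have hD_sm : StronglyMeasurable[mMAXU] D :=
      (hM_mMAXU.stronglyMeasurable.sub
        ((hA_mMAXU.const_mul θ3).stronglyMeasurable)).sub (hH_sm.mono hX_le_MAXU)
    have hC_sm : StronglyMeasurable[mAXU] C :=
      ((hA_mAXU.const_mul θ2).stronglyMeasurable).add hg0_mAXU.stronglyMeasurable
    have hk_sm : StronglyMeasurable[mXU] k :=
      hh0_mXU.stronglyMeasurable.sub (hH_sm.mono hX_le_XU)
    -- step a : E[DW | MAXU] = D*C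
    have ea : μ[fun ω => D ω * W ω|mMAXU] =ᵐ[μ] fun ω => D ω * C ω := by
      have e : μ[fun ω => D ω * W ω|mMAXU] =ᵐ[μ] fun ω => D ω * (μ[W|mMAXU]) ω :=
        condExp_mul_of_stronglyMeasurable_left hD_sm hDW_int (hW2.integrable one_le_two)
      have eW : μ[W|mMAXU] =ᵐ[μ] C := by
        have s2 : μ[W|mMAXU] =ᵐ[μ] μ[Y|mMAXU] - μ[fun ω => θ1 * M ω|mMAXU] :=
          condExp_sub hYi (hMi.const_mul θ1) mMAXU
        have s3 : μ[fun ω => θ1 * M ω|mMAXU] = fun ω => θ1 * M ω :=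
          condExp_of_stronglyMeasurable hmMAXU
            ((hM_mMAXU.const_mul θ1).stronglyMeasurable) (hMi.const_mul θ1)
        filter_upwards [s2, hout] with ω k1 k2
        simp only [Pi.sub_apply] at k1
        rw [k1, s3, k2, hCdef]
        ring
      filter_upwards [e, eW] with ω e1 e2
      rw [e1, e2]
    -- step b : E[D*C | AXU] = C*k
    have eb : μ[fun ω => D ω * C ω|mAXU] =ᵐ[μ] fun ω => C ω * k ω := by
      have e0 : (fun ω => D ω * C ω) =ᵐ[μ] fun ω => C ω * D ω :=
        Filter.Eventually.of_forall fun ω => mul_comm _ _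
      have e : μ[fun ω => C ω * D ω|mAXU] =ᵐ[μ] fun ω => C ω * (μ[D|mAXU]) ω :=
        condExp_mul_of_stronglyMeasurable_left hC_sm hCD_int (hD2.integrable one_le_two)
      have eD : μ[D|mAXU] =ᵐ[μ] k := by
        have s1 : μ[D|mAXU] =ᵐ[μ] μ[fun ω => M ω - θ3 * A ω|mAXU] - μ[H|mAXU] :=
          condExp_sub (hMi.sub (hAi.const_mul θ3)) hHi mAXU
        have s2 : μ[fun ω => M ω - θ3 * A ω|mAXU]
            =ᵐ[μ] μ[M|mAXU] - μ[fun ω => θ3 * A ω|mAXU] :=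
          condExp_sub hMi (hAi.const_mul θ3) mAXU
        have s3 : μ[fun ω => θ3 * A ω|mAXU] = fun ω => θ3 * A ω :=
          condExp_of_stronglyMeasurable hmAXU
            ((hA_mAXU.const_mul θ3).stronglyMeasurable) (hAi.const_mul θ3)
        have s4 : μ[H|mAXU] = H :=
          condExp_of_stronglyMeasurable hmAXU (hH_sm.mono hX_le_AXU) hHi
        filter_upwards [s1, s2, hmed] with ω k1 k2 k3
        simp only [Pi.sub_apply] at k1 k2
        rw [k1, k2, s3, s4, k3, hkdef]
        simp only [hh0def]
        ring
      refine (condExp_congr_ae e0).trans ?_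
      filter_upwards [e, eD] with ω e1 e2
      rw [e1, e2]
    -- decomposition of C*k
    have eCk : (fun ω => C ω * k ω)
        = fun ω => (θ2 * A ω) * k ω + g0 ω * k ω := by
      funext ω
      rw [hCdef]
      ring
    -- E[k | AX] = 0
    have ekAX : μ[k|mAX] =ᵐ[μ] 0 := by
      have s1 : μ[k|mAX] =ᵐ[μ] μ[h0|mAX] - μ[H|mAX] := condExp_sub hh0i hHi mAX
      have s2 : μ[H|mAX] = H :=
        condExp_of_stronglyMeasurable hmAX (hH_sm.mono hX_le_AX) hHi
      filter_upwards [s1, hh0AX] with ω k1 k2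
      simp only [Pi.sub_apply] at k1
      rw [k1, s2, k2]
      simp
    -- E[k | X] = 0
    have ekX : μ[k|mX] =ᵐ[μ] 0 := by
      have s1 : μ[k|mX] =ᵐ[μ] μ[h0|mX] - μ[H|mX] := condExp_sub hh0i hHi mX
      have s2 : μ[H|mX] = H :=
        condExp_of_stronglyMeasurable hmX hH_sm hHi
      filter_upwards [s1] with ω k1
      simp only [Pi.sub_apply] at k1
      rw [k1, s2]
      simp [hHdef]
    -- E[(θ2 A) k | AX] = 0
    have eAkAX : μ[fun ω => (θ2 * A ω) * k ω|mAX] =ᵐ[μ] 0 := by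
      have e := condExp_mul_of_stronglyMeasurable_left
        ((hA_mAX.const_mul θ2).stronglyMeasurable) hAk_int hki
      refine e.trans ?_
      filter_upwards [ekAX] with ω k1
      simp only [Pi.mul_apply]
      rw [k1]
      simp
    -- E[(θ2 A) k | X] = 0
    have eAkX : μ[fun ω => (θ2 * A ω) * k ω|mX] =ᵐ[μ] 0 := by
      have t1 : μ[fun ω => (θ2 * A ω) * k ω|mX]
          =ᵐ[μ] μ[μ[fun ω => (θ2 * A ω) * k ω|mXU]|mX] :=
        (condExp_condExp_of_le hX_le_XU hmXU).symm
      have hkA_int : Integrable (fun ω => k ω * (θ2 * A ω)) μ :=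
        integrable_mul_L2 hk2 (hA.const_mul θ2)
      have hAX2 : MemLp (μ[A|mX]) 2 μ := memLp_two_condexp hmX hA
      have hGk_int : Integrable (fun ω => (θ2 * (μ[A|mX]) ω) * k ω) μ :=
        integrable_mul_L2 (hAX2.const_mul θ2) hk2
      have t2 : μ[fun ω => (θ2 * A ω) * k ω|mXU]
          =ᵐ[μ] fun ω => (θ2 * (μ[A|mX]) ω) * k ω := by
        have e0 : (fun ω => (θ2 * A ω) * k ω) =ᵐ[μ] fun ω => k ω * (θ2 * A ω) :=
          Filter.Eventually.of_forall fun ω => mul_comm _ _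
        have e : μ[fun ω => k ω * (θ2 * A ω)|mXU]
            =ᵐ[μ] fun ω => k ω * (μ[fun ω => θ2 * A ω|mXU]) ω :=
          condExp_mul_of_stronglyMeasurable_left hk_sm hkA_int (hAi.const_mul θ2)
        have eA : μ[fun ω => θ2 * A ω|mXU] =ᵐ[μ] fun ω => θ2 * (μ[A|mX]) ω := by
          have e1 := condExp_smul (μ := μ) (m := mXU) θ2 A
          have e2 : μ[A|mXU] =ᵐ[μ] μ[A|mX] :=
            F1' hAi (hA_mXA.stronglyMeasurable.aestronglyMeasurable)
          refine (Filter.EventuallyEq.trans ?_ e1).trans ?_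
          · rfl
          · filter_upwards [e2] with ω k1
            simp only [Pi.smul_apply, smul_eq_mul]
            rw [k1]
        refine (condExp_congr_ae e0).trans ?_
        filter_upwards [e, eA] with ω k1 k2
        rw [k1, k2]
        ring
      have t3 : μ[fun ω => (θ2 * (μ[A|mX]) ω) * k ω|mX] =ᵐ[μ] 0 := by
        have e := condExp_mul_of_stronglyMeasurable_left
          (stronglyMeasurable_condExp.const_mul θ2) hGk_int hki
        refine e.trans ?_
        filter_upwards [ekX] with ω k1
        simp only [Pi.mul_apply]
        rw [k1]
        simp
      exact (t1.trans (condExp_congr_ae t2)).trans t3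
    -- E[g0 k | AX] = E[g0 k | X]
    have egk : μ[fun ω => g0 ω * k ω|mAX] =ᵐ[μ] μ[fun ω => g0 ω * k ω|mX] :=
      F1 hgk_int ((hg0_mXU.stronglyMeasurable.mul hk_sm).aestronglyMeasurable)
    -- assemble the AX side
    have cAX : μ[fun ω => D ω * W ω|mAX] =ᵐ[μ] μ[fun ω => g0 ω * k ω|mX] := by
      have c1 : μ[fun ω => D ω * W ω|mAX] =ᵐ[μ] μ[fun ω => D ω * C ω|mAX] :=
        (condExp_condExp_of_le hAX_le_MAXU hmMAXU).symm.trans (condExp_congr_ae ea)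
      have c2 : μ[fun ω => D ω * C ω|mAX] =ᵐ[μ] μ[fun ω => C ω * k ω|mAX] :=
        (condExp_condExp_of_le hAX_le_AXU hmAXU).symm.trans (condExp_congr_ae eb)
      have c3 : μ[fun ω => C ω * k ω|mAX]
          =ᵐ[μ] μ[fun ω => (θ2 * A ω) * k ω|mAX] + μ[fun ω => g0 ω * k ω|mAX] := by
        rw [eCk]
        exact condExp_add hAk_int hgk_int mAX
      have c4 : μ[fun ω => (θ2 * A ω) * k ω|mAX] + μ[fun ω => g0 ω * k ω|mAX]
          =ᵐ[μ] μ[fun ω => g0 ω * k ω|mX] := by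
        filter_upwards [eAkAX, egk] with ω k1 k2
        simp only [Pi.add_apply]
        rw [k1, k2]
        simp
      exact ((c1.trans c2).trans c3).trans c4
    have cX : μ[fun ω => D ω * W ω|mX] =ᵐ[μ] μ[fun ω => g0 ω * k ω|mX] := by
      have c1 : μ[fun ω => D ω * W ω|mX] =ᵐ[μ] μ[fun ω => D ω * C ω|mX] :=
        (condExp_condExp_of_le hX_le_MAXU hmMAXU).symm.trans (condExp_congr_ae ea)
      have c2 : μ[fun ω => D ω * C ω|mX] =ᵐ[μ] μ[fun ω => C ω * k ω|mX] :=
        (condExp_condExp_of_le hX_le_AXU hmAXU).symm.trans (condExp_congr_ae eb)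
      have c3 : μ[fun ω => C ω * k ω|mX]
          =ᵐ[μ] μ[fun ω => (θ2 * A ω) * k ω|mX] + μ[fun ω => g0 ω * k ω|mX] := by
        rw [eCk]
        exact condExp_add hAk_int hgk_int mX
      have c4 : μ[fun ω => (θ2 * A ω) * k ω|mX] + μ[fun ω => g0 ω * k ω|mX]
          =ᵐ[μ] μ[fun ω => g0 ω * k ω|mX] := by
        filter_upwards [eAkX] with ω k1
        simp only [Pi.add_apply]
        rw [k1]
        simp
      exact ((c1.trans c2).trans c3).trans c4
    calc μ[fun ω => (M ω - θ3 * A ω - hstar ω) * (Y ω - θ1 * M ω)|mAX]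
        =ᵐ[μ] μ[fun ω => D ω * W ω|mAX] := condExp_congr_ae hψ2_eq
      _ =ᵐ[μ] μ[fun ω => g0 ω * k ω|mX] := cAX
      _ =ᵐ[μ] μ[fun ω => D ω * W ω|mX] := cX.symm
      _ =ᵐ[μ] μ[fun ω => (M ω - θ3 * A ω - hstar ω) * (Y ω - θ1 * M ω)|mX] :=
          condExp_congr_ae hψ2_eq.symm
  · -- ψ3
    have e1 : μ[fun ω => M ω - θ3 * A ω|mAXU] =ᵐ[μ] h0 := by
      have s1 : μ[fun ω => M ω - θ3 * A ω|mAXU]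
          =ᵐ[μ] μ[M|mAXU] - μ[fun ω => θ3 * A ω|mAXU] :=
        condExp_sub hMi (hAi.const_mul θ3) mAXU
      have s3 : μ[fun ω => θ3 * A ω|mAXU] = fun ω => θ3 * A ω :=
        condExp_of_stronglyMeasurable hmAXU
          ((hA_mAXU.const_mul θ3).stronglyMeasurable) (hAi.const_mul θ3)
      filter_upwards [s1, hmed] with ω k1 k2
      simp only [Pi.sub_apply] at k1
      rw [k1, s3, k2]
      simp only [hh0def]
      ring
    have c1 : μ[fun ω => M ω - θ3 * A ω|mAX] =ᵐ[μ] μ[h0|mAX] :=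
      (condExp_condExp_of_le hAX_le_AXU hmAXU).symm.trans (condExp_congr_ae e1)
    have c2 : μ[fun ω => M ω - θ3 * A ω|mX] =ᵐ[μ] μ[h0|mX] :=
      (condExp_condExp_of_le hX_le_AXU hmAXU).symm.trans (condExp_congr_ae e1)
    have c3 : μ[h0|mAX] =ᵐ[μ] μ[h0|mX] :=
      F1 hh0i (hh0_mXU.stronglyMeasurable.aestronglyMeasurable)
    exact (c1.trans c3).trans c2.symm
end

section
/- In the same setting, if the working models satisfy ḡ*=g*, ρ̄=ρ, and h̄*=h* (with arbitrary misspecified π̄), then E[φ̃(O;θ, π̄, g*, ρ, h*)] = 0 (robustness under model M3). Concretely, E(φ̃|A,X)=0 a.s. when g*, ρ, h* are correct, for any function π̄ of X. -/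
open MeasureTheory ProbabilityTheory
open scoped ENNReal NNReal

namespace Stmt13Aux

variable {Ω : Type*} [mΩ : MeasurableSpace Ω]

lemma comap_le_of_comp {β γ : Type*} [mβ : MeasurableSpace β] [mγ : MeasurableSpace γ]
    {f : Ω → β} {g : Ω → γ} (φ : γ → β) (hφ : Measurable φ) (hfg : ∀ ω, f ω = φ (g ω)) :
    MeasurableSpace.comap f mβ ≤ MeasurableSpace.comap g mγ := by
  rintro S ⟨s, hs, rfl⟩
  exact ⟨φ ⁻¹' s, hφ hs, by ext ω; simp [hfg ω]⟩

def pairSets {β γ : Type*} [MeasurableSpace β] [MeasurableSpace γ]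
    (f : Ω → β) (g : Ω → γ) : Set (Set Ω) :=
  {S | ∃ s t, MeasurableSet s ∧ MeasurableSet t ∧ S = f ⁻¹' s ∩ g ⁻¹' t}

lemma isPiSystem_pairSets {β γ : Type*} [MeasurableSpace β] [MeasurableSpace γ]
    (f : Ω → β) (g : Ω → γ) : IsPiSystem (pairSets f g) := by
  rintro S ⟨s, t, hs, ht, rfl⟩ T ⟨s', t', hs', ht', rfl⟩ -
  exact ⟨s ∩ s', t ∩ t', hs.inter hs', ht.inter ht', by ext ω; simp; tauto⟩

lemma comap_pair_eq {β γ : Type*} [mβ : MeasurableSpace β] [mγ : MeasurableSpace γ]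
    (f : Ω → β) (g : Ω → γ) :
    MeasurableSpace.comap (fun ω => (f ω, g ω)) inferInstance
      = MeasurableSpace.generateFrom (pairSets f g) := by
  refine le_antisymm ?_ (MeasurableSpace.generateFrom_le ?_)
  · have hf' : @Measurable Ω β (MeasurableSpace.generateFrom (pairSets f g)) mβ f :=
      fun s hs => MeasurableSpace.measurableSet_generateFrom
        ⟨s, Set.univ, hs, MeasurableSet.univ, by simp⟩
    have hg' : @Measurable Ω γ (MeasurableSpace.generateFrom (pairSets f g)) mγ g :=
      fun t ht => MeasurableSpace.measurableSet_generateFrom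
        ⟨Set.univ, t, MeasurableSet.univ, ht, by simp⟩
    exact measurable_iff_comap_le.mp (hf'.prodMk hg')
  · rintro S ⟨s, t, hs, ht, rfl⟩
    exact ⟨s ×ˢ t, hs.prod ht, by ext ω; simp⟩

lemma pairSet_mem_comap {β γ : Type*} [mβ : MeasurableSpace β] [mγ : MeasurableSpace γ]
    {f : Ω → β} {g : Ω → γ} {s : Set β} {t : Set γ} (hs : MeasurableSet s)
    (ht : MeasurableSet t) :
    MeasurableSet[MeasurableSpace.comap (fun ω => (f ω, g ω)) inferInstance]
      (f ⁻¹' s ∩ g ⁻¹' t) :=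
  ⟨s ×ˢ t, hs.prod ht, by ext ω; simp⟩

lemma condExp_zero_of_condIndep
    {𝓧 𝓤 : Type*} [StandardBorelSpace Ω] [Nonempty Ω]
    {m𝓧 : MeasurableSpace 𝓧} {m𝓤 : MeasurableSpace 𝓤}
    (μ : Measure Ω) [IsProbabilityMeasure μ]
    (A : Ω → ℝ) (X : Ω → 𝓧) (U : Ω → 𝓤)
    (hAm : Measurable A) (hXm : Measurable X) (hUm : Measurable U)
    (hAU : CondIndepFun (MeasurableSpace.comap X m𝓧) hXm.comap_le A U μ)
    (k : Ω → ℝ) (hk : Integrable k μ)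
    (hkm : StronglyMeasurable[MeasurableSpace.comap (fun ω => (X ω, U ω)) inferInstance] k)
    (hk0 : μ[k | MeasurableSpace.comap X m𝓧] =ᵐ[μ] 0) :
    μ[k | MeasurableSpace.comap (fun ω => (A ω, X ω)) inferInstance] =ᵐ[μ] 0 := by
  classical
  have hmX : MeasurableSpace.comap X m𝓧 ≤ mΩ := hXm.comap_le
  have hmAX : MeasurableSpace.comap (fun ω => (A ω, X ω)) inferInstance ≤ mΩ :=
    (hAm.prodMk hXm).comap_le
  have hmXU : MeasurableSpace.comap (fun ω => (X ω, U ω)) inferInstance ≤ mΩ :=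
    (hXm.prodMk hUm).comap_le
  have hint0 : ∫ ω, k ω ∂μ = 0 := by
    rw [← integral_condExp hmX (f := k), integral_congr_ae hk0]
    simp
  have hbasic : ∀ s t, MeasurableSet s → MeasurableSet t →
      ∫ ω in A ⁻¹' s ∩ X ⁻¹' t, k ω ∂μ = 0 := by
    intro s t hs ht
    set ps := μ[(A ⁻¹' s).indicator (fun _ => (1:ℝ)) | MeasurableSpace.comap X m𝓧] with hps_def
    have hps_sm : StronglyMeasurable[MeasurableSpace.comap X m𝓧] ps := stronglyMeasurable_condExp
    have hps_int : Integrable ps μ := integrable_condExp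
    have hind_int : Integrable ((A ⁻¹' s).indicator fun _ => (1:ℝ)) μ :=
      (integrable_const (1:ℝ)).indicator (hAm hs)
    have hps_nonneg : 0 ≤ᵐ[μ] ps :=
      condExp_nonneg (Filter.Eventually.of_forall fun ω =>
        Set.indicator_nonneg (fun _ _ => zero_le_one) ω)
    have hps_le_one : ps ≤ᵐ[μ] fun _ => (1:ℝ) := by
      have h2 := condExp_mono (μ := μ) (m := MeasurableSpace.comap X m𝓧) hind_int
        (integrable_const (1:ℝ))
        (Filter.Eventually.of_forall fun ω =>
          Set.indicator_le' (fun _ _ => le_rfl) (fun _ _ => zero_le_one) ω)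
      rwa [condExp_const hmX] at h2
    have hps_bound : ∀ᵐ ω ∂μ, ‖ps ω‖ ≤ 1 := by
      filter_upwards [hps_nonneg, hps_le_one] with ω h0 h1
      rw [Real.norm_eq_abs, abs_of_nonneg h0]
      exact h1
    have hXt_mX : MeasurableSet[MeasurableSpace.comap X m𝓧] (X ⁻¹' t) := ⟨t, ht, rfl⟩
    -- the two measures agree on rectangles in (X, U)
    have hmain : ∀ t' u', MeasurableSet t' → MeasurableSet u' →
        μ ((X ⁻¹' t' ∩ U ⁻¹' u') ∩ (A ⁻¹' s ∩ X ⁻¹' t))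
          = ((μ.restrict (X ⁻¹' t)).withDensity
              (fun ω => ENNReal.ofReal (ps ω))) (X ⁻¹' t' ∩ U ⁻¹' u') := by
      intro t' u' ht' hu'
      set qs := μ[(U ⁻¹' u').indicator (fun _ => (1:ℝ)) | MeasurableSpace.comap X m𝓧]
        with hqs_def
      have hindU_int : Integrable ((U ⁻¹' u').indicator fun _ => (1:ℝ)) μ :=
        (integrable_const (1:ℝ)).indicator (hUm hu')
      have hE_meas : MeasurableSet (X ⁻¹' t' ∩ U ⁻¹' u') := (hXm ht').inter (hUm hu')
      have hB_mX : MeasurableSet[MeasurableSpace.comap X m𝓧] (X ⁻¹' t' ∩ X ⁻¹' t) :=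
        ⟨t' ∩ t, ht'.inter ht, by rw [Set.preimage_inter]⟩
      have hB : MeasurableSet (X ⁻¹' t' ∩ X ⁻¹' t) := hmX _ hB_mX
      have hRHS : ((μ.restrict (X ⁻¹' t)).withDensity
          (fun ω => ENNReal.ofReal (ps ω))) (X ⁻¹' t' ∩ U ⁻¹' u')
          = ENNReal.ofReal (∫ ω in (X ⁻¹' t' ∩ U ⁻¹' u') ∩ X ⁻¹' t, ps ω ∂μ) := by
        rw [withDensity_apply _ hE_meas, Measure.restrict_restrict hE_meas]
        exact (ofReal_integral_eq_lintegral_ofReal hps_int.integrableOn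
          (ae_restrict_of_ae hps_nonneg)).symm
      have hreal : (μ ((X ⁻¹' t' ∩ U ⁻¹' u') ∩ (A ⁻¹' s ∩ X ⁻¹' t))).toReal
          = ∫ ω in (X ⁻¹' t' ∩ U ⁻¹' u') ∩ X ⁻¹' t, ps ω ∂μ := by
        have hset1 : (X ⁻¹' t' ∩ U ⁻¹' u') ∩ (A ⁻¹' s ∩ X ⁻¹' t)
            = (A ⁻¹' s ∩ U ⁻¹' u') ∩ (X ⁻¹' t' ∩ X ⁻¹' t) := by ext ω; simp; tauto
        have hset2 : (X ⁻¹' t' ∩ U ⁻¹' u') ∩ X ⁻¹' t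
            = U ⁻¹' u' ∩ (X ⁻¹' t' ∩ X ⁻¹' t) := by ext ω; simp; tauto
        rw [hset1, hset2]
        have hASU : MeasurableSet (A ⁻¹' s ∩ U ⁻¹' u') := (hAm hs).inter (hUm hu')
        have hindASU_int : Integrable ((A ⁻¹' s ∩ U ⁻¹' u').indicator fun _ => (1:ℝ)) μ :=
          (integrable_const (1:ℝ)).indicator hASU
        have lhs1 : (μ ((A ⁻¹' s ∩ U ⁻¹' u') ∩ (X ⁻¹' t' ∩ X ⁻¹' t))).toReal
            = ∫ ω in X ⁻¹' t' ∩ X ⁻¹' t,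
                ((A ⁻¹' s ∩ U ⁻¹' u').indicator fun _ => (1:ℝ)) ω ∂μ := by
          rw [setIntegral_indicator hASU, setIntegral_const, smul_eq_mul, mul_one,
            Set.inter_comm, measureReal_def]
        have hprod := (condIndepFun_iff_condExp_inter_preimage_eq_mul hAm hUm).mp hAU s u' hs hu'
        have lhs2 : ∫ ω in X ⁻¹' t' ∩ X ⁻¹' t,
              ((A ⁻¹' s ∩ U ⁻¹' u').indicator fun _ => (1:ℝ)) ω ∂μ
            = ∫ ω in X ⁻¹' t' ∩ X ⁻¹' t, ps ω * qs ω ∂μ := by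
          rw [← setIntegral_condExp hmX hindASU_int hB_mX]
          exact integral_congr_ae (ae_restrict_of_ae hprod)
        have hpsind_int : Integrable
            (fun ω => ps ω * (U ⁻¹' u').indicator (fun _ => (1:ℝ)) ω) μ :=
          hindU_int.bdd_mul ((hps_sm.mono hmX).aestronglyMeasurable) hps_bound
        have hpull : μ[(fun ω => ps ω * (U ⁻¹' u').indicator (fun _ => (1:ℝ)) ω)
            | MeasurableSpace.comap X m𝓧] =ᵐ[μ] fun ω => ps ω * qs ω :=
          condExp_mul_of_stronglyMeasurable_left hps_sm hpsind_int hindU_int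
        have rhs1 : ∫ ω in U ⁻¹' u' ∩ (X ⁻¹' t' ∩ X ⁻¹' t), ps ω ∂μ
            = ∫ ω in X ⁻¹' t' ∩ X ⁻¹' t,
                ps ω * (U ⁻¹' u').indicator (fun _ => (1:ℝ)) ω ∂μ := by
          rw [Set.inter_comm, ← setIntegral_indicator (hUm hu')]
          refine integral_congr_ae (Filter.Eventually.of_forall fun ω => ?_)
          by_cases hω : ω ∈ U ⁻¹' u' <;> simp [Set.indicator_apply, hω]
        have rhs2 : ∫ ω in X ⁻¹' t' ∩ X ⁻¹' t,
              ps ω * (U ⁻¹' u').indicator (fun _ => (1:ℝ)) ω ∂μ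
            = ∫ ω in X ⁻¹' t' ∩ X ⁻¹' t, ps ω * qs ω ∂μ := by
          rw [← setIntegral_condExp hmX hpsind_int hB_mX]
          exact integral_congr_ae (ae_restrict_of_ae hpull)
        rw [lhs1, lhs2, rhs1, rhs2]
      rw [hRHS, ← hreal, ENNReal.ofReal_toReal (measure_ne_top μ _)]
    -- finiteness of the density measure
    haveI hfin2 : IsFiniteMeasure
        ((μ.restrict (X ⁻¹' t)).withDensity (fun ω => ENNReal.ofReal (ps ω))) := by
      constructor
      rw [withDensity_apply _ MeasurableSet.univ, Measure.restrict_univ]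
      calc ∫⁻ ω, ENNReal.ofReal (ps ω) ∂(μ.restrict (X ⁻¹' t))
          ≤ ∫⁻ _, 1 ∂(μ.restrict (X ⁻¹' t)) := by
            refine lintegral_mono_ae ?_
            filter_upwards [ae_restrict_of_ae hps_le_one] with ω h
            exact ENNReal.ofReal_le_one.mpr h
        _ = μ.restrict (X ⁻¹' t) Set.univ := by simp
        _ < ⊤ := measure_lt_top _ _
    -- the trimmed measures agree
    have htrim : (μ.restrict (A ⁻¹' s ∩ X ⁻¹' t)).trim hmXU
        = ((μ.restrict (X ⁻¹' t)).withDensity (fun ω => ENNReal.ofReal (ps ω))).trim hmXU := by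
      refine ext_of_generate_finite (pairSets X U) (comap_pair_eq X U)
        (isPiSystem_pairSets X U) ?_ ?_
      · rintro S ⟨t', u', ht', hu', rfl⟩
        have hSm : MeasurableSet[MeasurableSpace.comap (fun ω => (X ω, U ω)) inferInstance]
            (X ⁻¹' t' ∩ U ⁻¹' u') := pairSet_mem_comap ht' hu'
        rw [trim_measurableSet_eq hmXU hSm, trim_measurableSet_eq hmXU hSm,
          Measure.restrict_apply ((hXm ht').inter (hUm hu'))]
        exact hmain t' u' ht' hu'
      · have hSm : MeasurableSet[MeasurableSpace.comap (fun ω => (X ω, U ω)) inferInstance]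
            (Set.univ : Set Ω) := MeasurableSet.univ
        rw [trim_measurableSet_eq hmXU hSm, trim_measurableSet_eq hmXU hSm,
          Measure.restrict_apply MeasurableSet.univ]
        have h := hmain Set.univ Set.univ MeasurableSet.univ MeasurableSet.univ
        simpa using h
    -- move the integral along the trimmed measures
    have hmove : ∫ ω in A ⁻¹' s ∩ X ⁻¹' t, k ω ∂μ
        = ∫ ω, k ω ∂((μ.restrict (X ⁻¹' t)).withDensity (fun ω => ENNReal.ofReal (ps ω))) := by
      calc ∫ ω in A ⁻¹' s ∩ X ⁻¹' t, k ω ∂μ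
          = ∫ ω, k ω ∂((μ.restrict (A ⁻¹' s ∩ X ⁻¹' t)).trim hmXU) := integral_trim hmXU hkm
        _ = ∫ ω, k ω ∂(((μ.restrict (X ⁻¹' t)).withDensity
              (fun ω => ENNReal.ofReal (ps ω))).trim hmXU) := by rw [htrim]
        _ = ∫ ω, k ω ∂((μ.restrict (X ⁻¹' t)).withDensity
              (fun ω => ENNReal.ofReal (ps ω))) := (integral_trim hmXU hkm).symm
    rw [hmove]
    -- compute the density integral
    have hnn : Measurable (fun ω => (ps ω).toNNReal) :=
      (hps_sm.mono hmX).measurable.real_toNNReal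
    have hrw : ((μ.restrict (X ⁻¹' t)).withDensity (fun ω => ENNReal.ofReal (ps ω)))
        = ((μ.restrict (X ⁻¹' t)).withDensity (fun ω => ((ps ω).toNNReal : ℝ≥0∞))) := rfl
    rw [hrw, integral_withDensity_eq_integral_smul hnn]
    have hpsk_int : Integrable (fun ω => ps ω * k ω) μ :=
      hk.bdd_mul ((hps_sm.mono hmX).aestronglyMeasurable) hps_bound
    have e1 : ∫ ω in X ⁻¹' t, (ps ω).toNNReal • k ω ∂μ
        = ∫ ω in X ⁻¹' t, ps ω * k ω ∂μ := by
      refine integral_congr_ae (ae_restrict_of_ae ?_)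
      filter_upwards [hps_nonneg] with ω h0
      simp [NNReal.smul_def, Real.coe_toNNReal _ h0]
    have hpull2 : μ[(fun ω => ps ω * k ω) | MeasurableSpace.comap X m𝓧] =ᵐ[μ]
        fun ω => ps ω * (μ[k | MeasurableSpace.comap X m𝓧]) ω :=
      condExp_mul_of_stronglyMeasurable_left hps_sm hpsk_int hk
    rw [e1, ← setIntegral_condExp hmX hpsk_int hXt_mX]
    refine Eq.trans (integral_congr_ae (ae_restrict_of_ae ?_)) (integral_zero _ _)
    filter_upwards [hpull2, hk0] with ω h1 h2
    rw [h1, h2]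
    simp
  -- extend from rectangles to all of σ(A, X)
  have key : ∀ S, MeasurableSet[MeasurableSpace.comap (fun ω => (A ω, X ω)) inferInstance] S →
      ∫ ω in S, k ω ∂μ = 0 := by
    intro S hS
    refine MeasurableSpace.induction_on_inter
      (m := MeasurableSpace.comap (fun ω => (A ω, X ω)) inferInstance)
      (C := fun S _ => ∫ ω in S, k ω ∂μ = 0)
      (comap_pair_eq A X) (isPiSystem_pairSets A X) (by simp) ?_ ?_ ?_ S hS
    · rintro T ⟨s, t, hs, ht, rfl⟩
      exact hbasic s t hs ht
    · intro T hT hTeq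
      have hadd := integral_add_compl (hmAX _ hT) hk
      rw [hTeq, hint0] at hadd
      linarith
    · intro f hdisj hfm hfeq
      rw [integral_iUnion (fun i => hmAX _ (hfm i)) hdisj hk.integrableOn]
      simp [hfeq]
  -- conclude by uniqueness of conditional expectation
  have h0 := ae_eq_condExp_of_forall_setIntegral_eq (μ := μ) hmAX hk
    (f := k) (g := fun _ => (0:ℝ))
    (fun s _ _ => (integrable_zero _ _ _).integrableOn)
    (fun s hs _ => by rw [key s hs]; simp)
    (StronglyMeasurable.aestronglyMeasurable
      (@stronglyMeasurable_const Ω ℝ (MeasurableSpace.comap (fun ω => (A ω, X ω)) inferInstance)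
        _ 0))
  exact h0.symm

lemma integrable_mul2 {μ : Measure Ω} {f g : Ω → ℝ}
    (hf : MemLp f 2 μ) (hg : MemLp g 2 μ) : Integrable (fun ω => f ω * g ω) μ := by
  rw [← memLp_one_iff_integrable]
  refine ⟨hf.aestronglyMeasurable.mul hg.aestronglyMeasurable, ?_⟩
  calc eLpNorm (fun ω => f ω * g ω) 1 μ ≤ eLpNorm f 2 μ * eLpNorm g 2 μ := by
        have := eLpNorm_le_eLpNorm_mul_eLpNorm_of_nnnorm (p := 2) (q := 2) (r := 1)
          hf.aestronglyMeasurable hg.aestronglyMeasurable (· * ·) 1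
          (Filter.Eventually.of_forall fun ω => by simp [nnnorm_mul])
        simpa using this
    _ < ⊤ := ENNReal.mul_lt_top hf.2 hg.2

lemma memLp_two_condExp {Ω : Type*} {m : MeasurableSpace Ω} [mΩ : MeasurableSpace Ω]
    (hm : m ≤ mΩ) (μ : Measure Ω)
    [IsFiniteMeasure μ] {f : Ω → ℝ} (hf : MemLp f 2 μ) : MemLp (μ[f|m]) 2 μ := by
  set x := @condExpL2 Ω ℝ ℝ _ _ _ _ m mΩ μ hm (hf.toLp f) with hx
  have heq : ((x : Lp ℝ 2 μ) : Ω → ℝ) =ᵐ[μ] μ[f|m] := by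
    refine ae_eq_condExp_of_forall_setIntegral_eq hm (hf.integrable one_le_two)
      (fun s _ _ => ((Lp.memLp _).integrable one_le_two).integrableOn)
      (fun s hs hμs => ?_) ?_
    · rw [hx, integral_condExpL2_eq hm (hf.toLp f) hs hμs.ne]
      exact setIntegral_congr_ae (hm s hs) ((hf.coeFn_toLp).mono fun ω h _ => h)
    · exact lpMeas.aestronglyMeasurable _
  exact (Lp.memLp _).ae_eq heq


end Stmt13Aux

open MeasureTheory ProbabilityTheory Stmt13Aux

/-- robustness under model M3: in the same setting, if `g*`, `ρ` and
`h*` are correctly specified while `π̄` is an arbitrary (possibly misspecified)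
function of `X`, then `E[φ̃(O;θ,π̄,g*,ρ,h*)] = 0`; concretely, each component of `φ̃`
satisfies `E(φ̃|A,X) = 0` almost surely. -/
theorem stmt13 {Ω 𝓧 𝓤 : Type*} {mΩ : MeasurableSpace Ω} [StandardBorelSpace Ω] [Nonempty Ω]
    {m𝓧 : MeasurableSpace 𝓧} {m𝓤 : MeasurableSpace 𝓤}
    (μ : Measure Ω) [IsProbabilityMeasure μ]
    (Y A M : Ω → ℝ) (X : Ω → 𝓧) (U : Ω → 𝓤)
    (hYm : Measurable Y) (hAm : Measurable A) (hMm : Measurable M)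
    (hXm : Measurable X) (hUm : Measurable U)
    (hY : MemLp Y 2 μ) (hA : MemLp A 2 μ) (hM : MemLp M 2 μ)
    (θ1 θ2 θ3 : ℝ) (g h : 𝓧 × 𝓤 → ℝ) (hg : Measurable g) (hh : Measurable h)
    (hgi : MemLp (fun ω => g (X ω, U ω)) 2 μ)
    (hhi : MemLp (fun ω => h (X ω, U ω)) 2 μ)
    (hout : μ[Y | MeasurableSpace.comap (fun ω => (M ω, A ω, X ω, U ω)) inferInstance]
        =ᵐ[μ] fun ω => θ1 * M ω + θ2 * A ω + g (X ω, U ω))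
    (hmed : μ[M | MeasurableSpace.comap (fun ω => (A ω, X ω, U ω)) inferInstance]
        =ᵐ[μ] fun ω => θ3 * A ω + h (X ω, U ω))
    (hAU : CondIndepFun (MeasurableSpace.comap X m𝓧) hXm.comap_le A U μ)
    -- correctly specified: g*(X) = E(g(X,U)|X), h*(X) = E(h(X,U)|X),
    -- ρ(X) = Cov(g(X,U),h(X,U)|X)
    (gstar hstar rhoX : Ω → ℝ)
    (hgstar : gstar =ᵐ[μ] μ[fun ω => g (X ω, U ω) | MeasurableSpace.comap X m𝓧])
    (hhstar : hstar =ᵐ[μ] μ[fun ω => h (X ω, U ω) | MeasurableSpace.comap X m𝓧])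
    (hrho : rhoX =ᵐ[μ] μ[fun ω => (g (X ω, U ω) - gstar ω) * (h (X ω, U ω) - hstar ω)
        | MeasurableSpace.comap X m𝓧])
    -- arbitrary (possibly misspecified) working model for π(X)
    (pibar : Ω → ℝ)
    (hpibarm : Measurable[MeasurableSpace.comap X m𝓧] pibar)
    (hint1 : Integrable
      (fun ω => (A ω - pibar ω) * (Y ω - θ1 * M ω - θ2 * A ω - gstar ω)) μ)
    (hint2 : Integrable
      (fun ω => (A ω - pibar ω) * ((M ω - θ3 * A ω - hstar ω)
        * (Y ω - θ1 * M ω - θ2 * A ω - gstar ω) - rhoX ω)) μ)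
    (hint3 : Integrable
      (fun ω => (A ω - pibar ω) * (M ω - θ3 * A ω - hstar ω)) μ) :
    (μ[fun ω => (A ω - pibar ω) * (Y ω - θ1 * M ω - θ2 * A ω - gstar ω)
        | MeasurableSpace.comap (fun ω => (A ω, X ω)) inferInstance] =ᵐ[μ] 0)
    ∧ (μ[fun ω => (A ω - pibar ω) * ((M ω - θ3 * A ω - hstar ω)
          * (Y ω - θ1 * M ω - θ2 * A ω - gstar ω) - rhoX ω)
        | MeasurableSpace.comap (fun ω => (A ω, X ω)) inferInstance] =ᵐ[μ] 0)
    ∧ (μ[fun ω => (A ω - pibar ω) * (M ω - θ3 * A ω - hstar ω)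
        | MeasurableSpace.comap (fun ω => (A ω, X ω)) inferInstance] =ᵐ[μ] 0)
    ∧ (∫ ω, (A ω - pibar ω) * (Y ω - θ1 * M ω - θ2 * A ω - gstar ω) ∂μ = 0)
    ∧ (∫ ω, (A ω - pibar ω) * ((M ω - θ3 * A ω - hstar ω)
        * (Y ω - θ1 * M ω - θ2 * A ω - gstar ω) - rhoX ω) ∂μ = 0)
    ∧ (∫ ω, (A ω - pibar ω) * (M ω - θ3 * A ω - hstar ω) ∂μ = 0) := by
  classical
  -- ambient bounds for the σ-algebras
  have hmX : MeasurableSpace.comap X m𝓧 ≤ mΩ := hXm.comap_le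
  have hmAX : MeasurableSpace.comap (fun ω => (A ω, X ω)) inferInstance ≤ mΩ :=
    (hAm.prodMk hXm).comap_le
  have hmXU : MeasurableSpace.comap (fun ω => (X ω, U ω)) inferInstance ≤ mΩ :=
    (hXm.prodMk hUm).comap_le
  have hmAXU : MeasurableSpace.comap (fun ω => (A ω, X ω, U ω)) inferInstance ≤ mΩ :=
    (hAm.prodMk (hXm.prodMk hUm)).comap_le
  have hmMAXU : MeasurableSpace.comap (fun ω => (M ω, A ω, X ω, U ω)) inferInstance ≤ mΩ :=
    (hMm.prodMk (hAm.prodMk (hXm.prodMk hUm))).comap_le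
  -- inclusions
  have hXle_AX : MeasurableSpace.comap X m𝓧
      ≤ MeasurableSpace.comap (fun ω => (A ω, X ω)) inferInstance :=
    comap_le_of_comp Prod.snd measurable_snd (fun ω => rfl)
  have hXle_XU : MeasurableSpace.comap X m𝓧
      ≤ MeasurableSpace.comap (fun ω => (X ω, U ω)) inferInstance :=
    comap_le_of_comp Prod.fst measurable_fst (fun ω => rfl)
  have hAXle_AXU : MeasurableSpace.comap (fun ω => (A ω, X ω)) inferInstance
      ≤ MeasurableSpace.comap (fun ω => (A ω, X ω, U ω)) inferInstance :=
    comap_le_of_comp (fun p => (p.1, p.2.1))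
      (measurable_fst.prodMk (measurable_fst.comp measurable_snd)) (fun ω => rfl)
  have hXUle_AXU : MeasurableSpace.comap (fun ω => (X ω, U ω)) inferInstance
      ≤ MeasurableSpace.comap (fun ω => (A ω, X ω, U ω)) inferInstance :=
    comap_le_of_comp Prod.snd measurable_snd (fun ω => rfl)
  have hAXUle_MAXU : MeasurableSpace.comap (fun ω => (A ω, X ω, U ω)) inferInstance
      ≤ MeasurableSpace.comap (fun ω => (M ω, A ω, X ω, U ω)) inferInstance :=
    comap_le_of_comp Prod.snd measurable_snd (fun ω => rfl)
  have hAXle_MAXU := hAXle_AXU.trans hAXUle_MAXU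
  have hXle_AXU := hXle_AX.trans hAXle_AXU
  have hXle_MAXU := hXle_AXU.trans hAXUle_MAXU
  -- measurability w.r.t. the sub-σ-algebras
  have hpair_AX : Measurable[MeasurableSpace.comap (fun ω => (A ω, X ω)) inferInstance]
      (fun ω => (A ω, X ω)) := measurable_iff_comap_le.mpr le_rfl
  have hpair_XU : Measurable[MeasurableSpace.comap (fun ω => (X ω, U ω)) inferInstance]
      (fun ω => (X ω, U ω)) := measurable_iff_comap_le.mpr le_rfl
  have hpair_AXU : Measurable[MeasurableSpace.comap (fun ω => (A ω, X ω, U ω)) inferInstance]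
      (fun ω => (A ω, X ω, U ω)) := measurable_iff_comap_le.mpr le_rfl
  have hpair_MAXU : Measurable[MeasurableSpace.comap (fun ω => (M ω, A ω, X ω, U ω))
      inferInstance] (fun ω => (M ω, A ω, X ω, U ω)) := measurable_iff_comap_le.mpr le_rfl
  have hA_AX : Measurable[MeasurableSpace.comap (fun ω => (A ω, X ω)) inferInstance] A :=
    measurable_fst.comp hpair_AX
  have hA_AXU : Measurable[MeasurableSpace.comap (fun ω => (A ω, X ω, U ω)) inferInstance] A :=
    measurable_fst.comp hpair_AXU
  have hM_MAXU : Measurable[MeasurableSpace.comap (fun ω => (M ω, A ω, X ω, U ω))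
      inferInstance] M := measurable_fst.comp hpair_MAXU
  have hA_MAXU : Measurable[MeasurableSpace.comap (fun ω => (M ω, A ω, X ω, U ω))
      inferInstance] A := (measurable_fst.comp measurable_snd).comp hpair_MAXU
  have hgXU_XU : Measurable[MeasurableSpace.comap (fun ω => (X ω, U ω)) inferInstance]
      (fun ω => g (X ω, U ω)) := hg.comp hpair_XU
  have hhXU_XU : Measurable[MeasurableSpace.comap (fun ω => (X ω, U ω)) inferInstance]
      (fun ω => h (X ω, U ω)) := hh.comp hpair_XU
  -- the correctly specified nuisance functions
  set gp := μ[fun ω => g (X ω, U ω) | MeasurableSpace.comap X m𝓧] with hgp_def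
  set hp := μ[fun ω => h (X ω, U ω) | MeasurableSpace.comap X m𝓧] with hhp_def
  set rp := μ[fun ω => (g (X ω, U ω) - gp ω) * (h (X ω, U ω) - hp ω)
    | MeasurableSpace.comap X m𝓧] with hrp_def
  have hrs : rhoX =ᵐ[μ] rp := by
    refine hrho.trans (condExp_congr_ae ?_)
    filter_upwards [hgstar, hhstar] with ω e1 e2
    rw [e1, e2]
  -- membership / integrability
  have hgp2 : MemLp gp 2 μ := memLp_two_condExp hmX μ hgi
  have hhp2 : MemLp hp 2 μ := memLp_two_condExp hmX μ hhi
  have hR1mem : MemLp (fun ω => Y ω - θ1 * M ω - θ2 * A ω - gp ω) 2 μ :=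
    ((hY.sub (hM.const_mul θ1)).sub (hA.const_mul θ2)).sub hgp2
  have hFmem : MemLp (fun ω => M ω - θ3 * A ω - hp ω) 2 μ :=
    (hM.sub (hA.const_mul θ3)).sub hhp2
  have hkgmem : MemLp (fun ω => g (X ω, U ω) - gp ω) 2 μ := hgi.sub hgp2
  have hkhmem : MemLp (fun ω => h (X ω, U ω) - hp ω) 2 μ := hhi.sub hhp2
  have iY : Integrable Y μ := hY.integrable one_le_two
  have iM : Integrable M μ := hM.integrable one_le_two
  have igXU : Integrable (fun ω => g (X ω, U ω)) μ := hgi.integrable one_le_two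
  have ihXU : Integrable (fun ω => h (X ω, U ω)) μ := hhi.integrable one_le_two
  have igp : Integrable gp μ := integrable_condExp
  have ihp : Integrable hp μ := integrable_condExp
  have irp : Integrable rp μ := integrable_condExp
  have iR1 : Integrable (fun ω => Y ω - θ1 * M ω - θ2 * A ω - gp ω) μ :=
    hR1mem.integrable one_le_two
  have iF : Integrable (fun ω => M ω - θ3 * A ω - hp ω) μ := hFmem.integrable one_le_two
  have ikg : Integrable (fun ω => g (X ω, U ω) - gp ω) μ := hkgmem.integrable one_le_two
  have ikh : Integrable (fun ω => h (X ω, U ω) - hp ω) μ := hkhmem.integrable one_le_two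
  have iFR1 : Integrable (fun ω => (M ω - θ3 * A ω - hp ω)
      * (Y ω - θ1 * M ω - θ2 * A ω - gp ω)) μ := integrable_mul2 hFmem hR1mem
  have ikgkh : Integrable (fun ω => (g (X ω, U ω) - gp ω) * (h (X ω, U ω) - hp ω)) μ :=
    integrable_mul2 hkgmem hkhmem
  have ikgF : Integrable (fun ω => (g (X ω, U ω) - gp ω) * (M ω - θ3 * A ω - hp ω)) μ :=
    integrable_mul2 hkgmem hFmem
  -- strong measurability of the "k" functions w.r.t. σ(X, U)
  have smkg : StronglyMeasurable[MeasurableSpace.comap (fun ω => (X ω, U ω)) inferInstance]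
      (fun ω => g (X ω, U ω) - gp ω) := by
    exact (hgXU_XU.stronglyMeasurable.sub (stronglyMeasurable_condExp.mono hXle_XU))
  have smkh : StronglyMeasurable[MeasurableSpace.comap (fun ω => (X ω, U ω)) inferInstance]
      (fun ω => h (X ω, U ω) - hp ω) := by
    exact (hhXU_XU.stronglyMeasurable.sub (stronglyMeasurable_condExp.mono hXle_XU))
  have smkW2 : StronglyMeasurable[MeasurableSpace.comap (fun ω => (X ω, U ω)) inferInstance]
      (fun ω => (g (X ω, U ω) - gp ω) * (h (X ω, U ω) - hp ω) - rp ω) := by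
    exact ((smkg.mul smkh).sub (stronglyMeasurable_condExp.mono hXle_XU))
  -- conditional expectation of the "k" functions given X is zero
  have k0g : μ[(fun ω => g (X ω, U ω) - gp ω) | MeasurableSpace.comap X m𝓧] =ᵐ[μ] 0 := by
    refine (condExp_sub igXU igp _).trans ?_
    rw [condExp_of_stronglyMeasurable hmX stronglyMeasurable_condExp igp, ← hgp_def, sub_self]
  have k0h : μ[(fun ω => h (X ω, U ω) - hp ω) | MeasurableSpace.comap X m𝓧] =ᵐ[μ] 0 := by
    refine (condExp_sub ihXU ihp _).trans ?_
    rw [condExp_of_stronglyMeasurable hmX stronglyMeasurable_condExp ihp, ← hhp_def, sub_self]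
  have k0W2 : μ[(fun ω => (g (X ω, U ω) - gp ω) * (h (X ω, U ω) - hp ω) - rp ω)
      | MeasurableSpace.comap X m𝓧] =ᵐ[μ] 0 := by
    refine (condExp_sub ikgkh irp _).trans ?_
    rw [condExp_of_stronglyMeasurable hmX stronglyMeasurable_condExp irp, ← hrp_def, sub_self]
  -- conditional expectation of the "k" functions given (A, X) is zero (core lemma)
  have ckg : μ[(fun ω => g (X ω, U ω) - gp ω)
      | MeasurableSpace.comap (fun ω => (A ω, X ω)) inferInstance] =ᵐ[μ] 0 :=
    condExp_zero_of_condIndep μ A X U hAm hXm hUm hAU _ ikg smkg k0g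
  have ckh : μ[(fun ω => h (X ω, U ω) - hp ω)
      | MeasurableSpace.comap (fun ω => (A ω, X ω)) inferInstance] =ᵐ[μ] 0 :=
    condExp_zero_of_condIndep μ A X U hAm hXm hUm hAU _ ikh smkh k0h
  have ckW2 : μ[(fun ω => (g (X ω, U ω) - gp ω) * (h (X ω, U ω) - hp ω) - rp ω)
      | MeasurableSpace.comap (fun ω => (A ω, X ω)) inferInstance] =ᵐ[μ] 0 :=
    condExp_zero_of_condIndep μ A X U hAm hXm hUm hAU _ (ikgkh.sub irp) smkW2 k0W2
  -- conditional expectation of the outcome residual given σ(M, A, X, U)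
  have iS1 : Integrable (fun ω => θ1 * M ω + θ2 * A ω + gp ω) μ :=
    ((iM.const_mul θ1).add ((hA.integrable one_le_two).const_mul θ2)).add igp
  have smS1 : StronglyMeasurable[MeasurableSpace.comap (fun ω => (M ω, A ω, X ω, U ω))
      inferInstance] (fun ω => θ1 * M ω + θ2 * A ω + gp ω) :=
    (((hM_MAXU.const_mul θ1).add (hA_MAXU.const_mul θ2)).add
      ((stronglyMeasurable_condExp.mono hXle_MAXU).measurable)).stronglyMeasurable
  have c1 : μ[(fun ω => Y ω - θ1 * M ω - θ2 * A ω - gp ω)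
      | MeasurableSpace.comap (fun ω => (M ω, A ω, X ω, U ω)) inferInstance]
      =ᵐ[μ] fun ω => g (X ω, U ω) - gp ω := by
    have hfe : (fun ω => Y ω - θ1 * M ω - θ2 * A ω - gp ω)
        = fun ω => Y ω - (θ1 * M ω + θ2 * A ω + gp ω) := by funext ω; ring
    rw [hfe]
    refine (condExp_sub iY iS1 _).trans ?_
    rw [condExp_of_stronglyMeasurable hmMAXU smS1 iS1]
    refine (hout.sub (Filter.EventuallyEq.refl _ _)).trans ?_
    refine Filter.Eventually.of_forall fun ω => ?_
    simp only [Pi.sub_apply]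
    ring
  -- conditional expectation of the mediator residual given σ(A, X, U)
  have iS3 : Integrable (fun ω => θ3 * A ω + hp ω) μ :=
    ((hA.integrable one_le_two).const_mul θ3).add ihp
  have smS3 : StronglyMeasurable[MeasurableSpace.comap (fun ω => (A ω, X ω, U ω))
      inferInstance] (fun ω => θ3 * A ω + hp ω) :=
    ((hA_AXU.const_mul θ3).add
      ((stronglyMeasurable_condExp.mono hXle_AXU).measurable)).stronglyMeasurable
  have c3 : μ[(fun ω => M ω - θ3 * A ω - hp ω)
      | MeasurableSpace.comap (fun ω => (A ω, X ω, U ω)) inferInstance]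
      =ᵐ[μ] fun ω => h (X ω, U ω) - hp ω := by
    have hfe : (fun ω => M ω - θ3 * A ω - hp ω)
        = fun ω => M ω - (θ3 * A ω + hp ω) := by funext ω; ring
    rw [hfe]
    refine (condExp_sub iM iS3 _).trans ?_
    rw [condExp_of_stronglyMeasurable hmAXU smS3 iS3]
    refine (hmed.sub (Filter.EventuallyEq.refl _ _)).trans ?_
    refine Filter.Eventually.of_forall fun ω => ?_
    simp only [Pi.sub_apply]
    ring
  -- tower: outcome residual
  have cR1 : μ[(fun ω => Y ω - θ1 * M ω - θ2 * A ω - gp ω)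
      | MeasurableSpace.comap (fun ω => (A ω, X ω)) inferInstance] =ᵐ[μ] 0 := by
    calc μ[(fun ω => Y ω - θ1 * M ω - θ2 * A ω - gp ω)
        | MeasurableSpace.comap (fun ω => (A ω, X ω)) inferInstance]
        =ᵐ[μ] μ[μ[(fun ω => Y ω - θ1 * M ω - θ2 * A ω - gp ω)
          | MeasurableSpace.comap (fun ω => (M ω, A ω, X ω, U ω)) inferInstance]
          | MeasurableSpace.comap (fun ω => (A ω, X ω)) inferInstance] :=
        (condExp_condExp_of_le hAXle_MAXU hmMAXU).symm
      _ =ᵐ[μ] μ[(fun ω => g (X ω, U ω) - gp ω)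
          | MeasurableSpace.comap (fun ω => (A ω, X ω)) inferInstance] := condExp_congr_ae c1
      _ =ᵐ[μ] 0 := ckg
  -- tower: mediator residual
  have cF : μ[(fun ω => M ω - θ3 * A ω - hp ω)
      | MeasurableSpace.comap (fun ω => (A ω, X ω)) inferInstance] =ᵐ[μ] 0 := by
    calc μ[(fun ω => M ω - θ3 * A ω - hp ω)
        | MeasurableSpace.comap (fun ω => (A ω, X ω)) inferInstance]
        =ᵐ[μ] μ[μ[(fun ω => M ω - θ3 * A ω - hp ω)
          | MeasurableSpace.comap (fun ω => (A ω, X ω, U ω)) inferInstance]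
          | MeasurableSpace.comap (fun ω => (A ω, X ω)) inferInstance] :=
        (condExp_condExp_of_le hAXle_AXU hmAXU).symm
      _ =ᵐ[μ] μ[(fun ω => h (X ω, U ω) - hp ω)
          | MeasurableSpace.comap (fun ω => (A ω, X ω)) inferInstance] := condExp_congr_ae c3
      _ =ᵐ[μ] 0 := ckh
  -- the product component, step 1 : condition on σ(M, A, X, U)
  have smF_MAXU : StronglyMeasurable[MeasurableSpace.comap (fun ω => (M ω, A ω, X ω, U ω))
      inferInstance] (fun ω => M ω - θ3 * A ω - hp ω) :=
    ((hM_MAXU.sub (hA_MAXU.const_mul θ3)).sub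
      ((stronglyMeasurable_condExp.mono hXle_MAXU).measurable)).stronglyMeasurable
  have cW_MAXU : μ[(fun ω => (M ω - θ3 * A ω - hp ω)
        * (Y ω - θ1 * M ω - θ2 * A ω - gp ω) - rp ω)
      | MeasurableSpace.comap (fun ω => (M ω, A ω, X ω, U ω)) inferInstance]
      =ᵐ[μ] fun ω => (M ω - θ3 * A ω - hp ω) * (g (X ω, U ω) - gp ω) - rp ω := by
    refine (condExp_sub iFR1 irp _).trans ?_
    have e2 : μ[(fun ω => (M ω - θ3 * A ω - hp ω) * (Y ω - θ1 * M ω - θ2 * A ω - gp ω))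
        | MeasurableSpace.comap (fun ω => (M ω, A ω, X ω, U ω)) inferInstance]
        =ᵐ[μ] fun ω => (M ω - θ3 * A ω - hp ω)
          * (μ[(fun ω => Y ω - θ1 * M ω - θ2 * A ω - gp ω)
            | MeasurableSpace.comap (fun ω => (M ω, A ω, X ω, U ω)) inferInstance]) ω :=
      condExp_mul_of_stronglyMeasurable_left smF_MAXU iFR1 iR1
    have e3 : μ[rp | MeasurableSpace.comap (fun ω => (M ω, A ω, X ω, U ω)) inferInstance]
        = rp := condExp_of_stronglyMeasurable hmMAXU
          (stronglyMeasurable_condExp.mono hXle_MAXU) irp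
    rw [e3]
    filter_upwards [e2, c1] with ω h2 hc1
    simp only [Pi.sub_apply]
    rw [h2, hc1]
  -- the product component, step 2 : condition on σ(A, X, U)
  have cW_AXU2 : μ[(fun ω => (M ω - θ3 * A ω - hp ω) * (g (X ω, U ω) - gp ω) - rp ω)
      | MeasurableSpace.comap (fun ω => (A ω, X ω, U ω)) inferInstance]
      =ᵐ[μ] fun ω => (g (X ω, U ω) - gp ω) * (h (X ω, U ω) - hp ω) - rp ω := by
    have hcomm : (fun ω => (M ω - θ3 * A ω - hp ω) * (g (X ω, U ω) - gp ω) - rp ω)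
        = fun ω => (g (X ω, U ω) - gp ω) * (M ω - θ3 * A ω - hp ω) - rp ω := by
      funext ω; ring
    rw [hcomm]
    refine (condExp_sub ikgF irp _).trans ?_
    have smkg_AXU : StronglyMeasurable[MeasurableSpace.comap (fun ω => (A ω, X ω, U ω))
        inferInstance] (fun ω => g (X ω, U ω) - gp ω) := smkg.mono hXUle_AXU
    have e2 : μ[(fun ω => (g (X ω, U ω) - gp ω) * (M ω - θ3 * A ω - hp ω))
        | MeasurableSpace.comap (fun ω => (A ω, X ω, U ω)) inferInstance]
        =ᵐ[μ] fun ω => (g (X ω, U ω) - gp ω)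
          * (μ[(fun ω => M ω - θ3 * A ω - hp ω)
            | MeasurableSpace.comap (fun ω => (A ω, X ω, U ω)) inferInstance]) ω :=
      condExp_mul_of_stronglyMeasurable_left smkg_AXU ikgF iF
    have e3 : μ[rp | MeasurableSpace.comap (fun ω => (A ω, X ω, U ω)) inferInstance]
        = rp := condExp_of_stronglyMeasurable hmAXU
          (stronglyMeasurable_condExp.mono hXle_AXU) irp
    rw [e3]
    filter_upwards [e2, c3] with ω h2 h3
    simp only [Pi.sub_apply]
    rw [h2, h3]
  -- tower: the product component
  have cW : μ[(fun ω => (M ω - θ3 * A ω - hp ω)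
        * (Y ω - θ1 * M ω - θ2 * A ω - gp ω) - rp ω)
      | MeasurableSpace.comap (fun ω => (A ω, X ω)) inferInstance] =ᵐ[μ] 0 := by
    have cW_AXU : μ[(fun ω => (M ω - θ3 * A ω - hp ω)
          * (Y ω - θ1 * M ω - θ2 * A ω - gp ω) - rp ω)
        | MeasurableSpace.comap (fun ω => (A ω, X ω, U ω)) inferInstance]
        =ᵐ[μ] fun ω => (g (X ω, U ω) - gp ω) * (h (X ω, U ω) - hp ω) - rp ω := by
      calc μ[(fun ω => (M ω - θ3 * A ω - hp ω)
            * (Y ω - θ1 * M ω - θ2 * A ω - gp ω) - rp ω)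
          | MeasurableSpace.comap (fun ω => (A ω, X ω, U ω)) inferInstance]
          =ᵐ[μ] μ[μ[(fun ω => (M ω - θ3 * A ω - hp ω)
              * (Y ω - θ1 * M ω - θ2 * A ω - gp ω) - rp ω)
            | MeasurableSpace.comap (fun ω => (M ω, A ω, X ω, U ω)) inferInstance]
            | MeasurableSpace.comap (fun ω => (A ω, X ω, U ω)) inferInstance] :=
          (condExp_condExp_of_le hAXUle_MAXU hmMAXU).symm
        _ =ᵐ[μ] μ[(fun ω => (M ω - θ3 * A ω - hp ω) * (g (X ω, U ω) - gp ω) - rp ω)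
            | MeasurableSpace.comap (fun ω => (A ω, X ω, U ω)) inferInstance] :=
          condExp_congr_ae cW_MAXU
        _ =ᵐ[μ] fun ω => (g (X ω, U ω) - gp ω) * (h (X ω, U ω) - hp ω) - rp ω := cW_AXU2
    calc μ[(fun ω => (M ω - θ3 * A ω - hp ω)
          * (Y ω - θ1 * M ω - θ2 * A ω - gp ω) - rp ω)
        | MeasurableSpace.comap (fun ω => (A ω, X ω)) inferInstance]
        =ᵐ[μ] μ[μ[(fun ω => (M ω - θ3 * A ω - hp ω)
            * (Y ω - θ1 * M ω - θ2 * A ω - gp ω) - rp ω)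
          | MeasurableSpace.comap (fun ω => (A ω, X ω, U ω)) inferInstance]
          | MeasurableSpace.comap (fun ω => (A ω, X ω)) inferInstance] :=
        (condExp_condExp_of_le hAXle_AXU hmAXU).symm
      _ =ᵐ[μ] μ[(fun ω => (g (X ω, U ω) - gp ω) * (h (X ω, U ω) - hp ω) - rp ω)
          | MeasurableSpace.comap (fun ω => (A ω, X ω)) inferInstance] :=
        condExp_congr_ae cW_AXU
      _ =ᵐ[μ] 0 := ckW2
  -- the treatment factor is σ(A, X)-measurable
  have hpibar_AX : Measurable[MeasurableSpace.comap (fun ω => (A ω, X ω)) inferInstance]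
      pibar := fun s hs => hXle_AX _ (hpibarm hs)
  have hAp_sm : StronglyMeasurable[MeasurableSpace.comap (fun ω => (A ω, X ω)) inferInstance]
      (fun ω => A ω - pibar ω) := (hA_AX.sub hpibar_AX).stronglyMeasurable
  -- a.e. rewriting of the goal integrands
  have hphi1 : (fun ω => (A ω - pibar ω) * (Y ω - θ1 * M ω - θ2 * A ω - gstar ω))
      =ᵐ[μ] fun ω => (A ω - pibar ω) * (Y ω - θ1 * M ω - θ2 * A ω - gp ω) := by
    filter_upwards [hgstar] with ω e1
    rw [e1]
  have hphi2 : (fun ω => (A ω - pibar ω) * ((M ω - θ3 * A ω - hstar ω)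
        * (Y ω - θ1 * M ω - θ2 * A ω - gstar ω) - rhoX ω))
      =ᵐ[μ] fun ω => (A ω - pibar ω) * ((M ω - θ3 * A ω - hp ω)
        * (Y ω - θ1 * M ω - θ2 * A ω - gp ω) - rp ω) := by
    filter_upwards [hgstar, hhstar, hrs] with ω e1 e2 e3
    rw [e1, e2, e3]
  have hphi3 : (fun ω => (A ω - pibar ω) * (M ω - θ3 * A ω - hstar ω))
      =ᵐ[μ] fun ω => (A ω - pibar ω) * (M ω - θ3 * A ω - hp ω) := by
    filter_upwards [hhstar] with ω e2
    rw [e2]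
  -- pull out the treatment factor
  have goal1 : μ[(fun ω => (A ω - pibar ω) * (Y ω - θ1 * M ω - θ2 * A ω - gstar ω))
      | MeasurableSpace.comap (fun ω => (A ω, X ω)) inferInstance] =ᵐ[μ] 0 := by
    calc μ[(fun ω => (A ω - pibar ω) * (Y ω - θ1 * M ω - θ2 * A ω - gstar ω))
        | MeasurableSpace.comap (fun ω => (A ω, X ω)) inferInstance]
        =ᵐ[μ] μ[(fun ω => (A ω - pibar ω) * (Y ω - θ1 * M ω - θ2 * A ω - gp ω))
          | MeasurableSpace.comap (fun ω => (A ω, X ω)) inferInstance] :=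
        condExp_congr_ae hphi1
      _ =ᵐ[μ] (fun ω => A ω - pibar ω) * μ[(fun ω => Y ω - θ1 * M ω - θ2 * A ω - gp ω)
          | MeasurableSpace.comap (fun ω => (A ω, X ω)) inferInstance] :=
        condExp_mul_of_stronglyMeasurable_left hAp_sm (hint1.congr hphi1) iR1
      _ =ᵐ[μ] 0 := by
        filter_upwards [cR1] with ω hω
        simp only [Pi.mul_apply]
        rw [hω]
        simp
  have goal2 : μ[(fun ω => (A ω - pibar ω) * ((M ω - θ3 * A ω - hstar ω)
        * (Y ω - θ1 * M ω - θ2 * A ω - gstar ω) - rhoX ω))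
      | MeasurableSpace.comap (fun ω => (A ω, X ω)) inferInstance] =ᵐ[μ] 0 := by
    calc μ[(fun ω => (A ω - pibar ω) * ((M ω - θ3 * A ω - hstar ω)
          * (Y ω - θ1 * M ω - θ2 * A ω - gstar ω) - rhoX ω))
        | MeasurableSpace.comap (fun ω => (A ω, X ω)) inferInstance]
        =ᵐ[μ] μ[(fun ω => (A ω - pibar ω) * ((M ω - θ3 * A ω - hp ω)
            * (Y ω - θ1 * M ω - θ2 * A ω - gp ω) - rp ω))
          | MeasurableSpace.comap (fun ω => (A ω, X ω)) inferInstance] :=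
        condExp_congr_ae hphi2
      _ =ᵐ[μ] (fun ω => A ω - pibar ω) * μ[(fun ω => (M ω - θ3 * A ω - hp ω)
            * (Y ω - θ1 * M ω - θ2 * A ω - gp ω) - rp ω)
          | MeasurableSpace.comap (fun ω => (A ω, X ω)) inferInstance] :=
        condExp_mul_of_stronglyMeasurable_left hAp_sm (hint2.congr hphi2) (iFR1.sub irp)
      _ =ᵐ[μ] 0 := by
        filter_upwards [cW] with ω hω
        simp only [Pi.mul_apply]
        rw [hω]
        simp
  have goal3 : μ[(fun ω => (A ω - pibar ω) * (M ω - θ3 * A ω - hstar ω))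
      | MeasurableSpace.comap (fun ω => (A ω, X ω)) inferInstance] =ᵐ[μ] 0 := by
    calc μ[(fun ω => (A ω - pibar ω) * (M ω - θ3 * A ω - hstar ω))
        | MeasurableSpace.comap (fun ω => (A ω, X ω)) inferInstance]
        =ᵐ[μ] μ[(fun ω => (A ω - pibar ω) * (M ω - θ3 * A ω - hp ω))
          | MeasurableSpace.comap (fun ω => (A ω, X ω)) inferInstance] :=
        condExp_congr_ae hphi3
      _ =ᵐ[μ] (fun ω => A ω - pibar ω) * μ[(fun ω => M ω - θ3 * A ω - hp ω)
          | MeasurableSpace.comap (fun ω => (A ω, X ω)) inferInstance] :=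
        condExp_mul_of_stronglyMeasurable_left hAp_sm (hint3.congr hphi3) iF
      _ =ᵐ[μ] 0 := by
        filter_upwards [cF] with ω hω
        simp only [Pi.mul_apply]
        rw [hω]
        simp
  refine ⟨goal1, goal2, goal3, ?_, ?_, ?_⟩
  · rw [← integral_condExp hmAX, integral_congr_ae goal1]
    simp
  · rw [← integral_condExp hmAX, integral_congr_ae goal2]
    simp
  · rw [← integral_condExp hmAX, integral_congr_ae goal3]
    simp
end

section
/- Under the partially linear models with exposure-mediator interaction E(Y|M,A,X,U)=θ1M+θ2A+ζAM+g(X,U) and E(M|A,X,U)=θ3A+h(X,U) together with latent sequential ignorability, the natural mediation effects are NDE(a,a') = [θ2 + ζ(θ3 a' + E(h*(X)))](a−a') and NIE(a,a') = θ3(θ1 + ζa)(a−a'), where h*(X)=E(h(X,U)|X). -/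
open MeasureTheory ProbabilityTheory

/-- with exposure–mediator interaction,
`E(Y|a,m,w) = θ1·m + θ2·a + ζ·a·m + g(w)` and conditional mediator law `κ a w` with
mean `θ3·a + h(w)`, the mediation functionals are
`NDE(a,a') = [θ2 + ζ(θ3·a' + E h*(X))](a−a')` and `NIE(a,a') = θ3(θ1 + ζa)(a−a')`. -/
theorem stmt14 {𝓦 : Type*} [MeasurableSpace 𝓦]
    (ν : Measure 𝓦) [IsProbabilityMeasure ν]
    (κ : ℝ → 𝓦 → Measure ℝ) [∀ a w, IsProbabilityMeasure (κ a w)]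
    (θ1 θ2 θ3 ζ : ℝ) (g h : 𝓦 → ℝ)
    (hg : Integrable g ν) (hh : Integrable h ν)
    (hκint : ∀ a w, Integrable id (κ a w))
    (hmean : ∀ a w, ∫ m, m ∂(κ a w) = θ3 * a + h w)
    (a a' : ℝ) :
    -- NDE(a,a') = ∬ [E(Y|a,m,w) − E(Y|a',m,w)] f(m|a',w) f(w) dm dw
    (∫ w, (∫ m, ((θ1 * m + θ2 * a + ζ * a * m + g w)
          - (θ1 * m + θ2 * a' + ζ * a' * m + g w)) ∂(κ a' w)) ∂ν
      = (θ2 + ζ * (θ3 * a' + ∫ w, h w ∂ν)) * (a - a'))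
    -- NIE(a,a') = ∬ E(Y|a,m,w) [f(m|a,w) − f(m|a',w)] f(w) dm dw
    ∧ (∫ w, ((∫ m, (θ1 * m + θ2 * a + ζ * a * m + g w) ∂(κ a w))
          - (∫ m, (θ1 * m + θ2 * a + ζ * a * m + g w) ∂(κ a' w))) ∂ν
      = θ3 * (θ1 + ζ * a) * (a - a')) := by
  have key : ∀ (c d b : ℝ) (w : 𝓦),
      ∫ m, (c * m + d) ∂(κ b w) = c * (θ3 * b + h w) + d := by
    intro c d b w
    have h1 : Integrable (fun m : ℝ => c * m) (κ b w) := (hκint b w).const_mul c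
    rw [integral_add h1 (integrable_const d), integral_const, integral_const_mul]
    simp [hmean b w]
  constructor
  · have e1 : ∀ w, (∫ m, ((θ1 * m + θ2 * a + ζ * a * m + g w)
        - (θ1 * m + θ2 * a' + ζ * a' * m + g w)) ∂(κ a' w))
        = (ζ * (a - a')) * (θ3 * a' + h w) + θ2 * (a - a') := by
      intro w
      have : (fun m => (θ1 * m + θ2 * a + ζ * a * m + g w)
          - (θ1 * m + θ2 * a' + ζ * a' * m + g w))
          = fun m => (ζ * (a - a')) * m + θ2 * (a - a') := by
        funext m; ring
      rw [this, key]
    simp only [e1]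
    have h2 : Integrable (fun w => (ζ * (a - a')) * (θ3 * a' + h w)) ν :=
      (((integrable_const (θ3 * a')).add hh).const_mul _)
    rw [integral_add h2 (integrable_const _), integral_const, integral_const_mul,
      integral_add (integrable_const _) hh, integral_const, probReal_univ]
    simp only [ENNReal.toReal_one, one_smul, smul_eq_mul, one_mul]
    ring
  · have e2 : ∀ (b : ℝ) (w : 𝓦), (∫ m, (θ1 * m + θ2 * a + ζ * a * m + g w) ∂(κ b w))
        = (θ1 + ζ * a) * (θ3 * b + h w) + (θ2 * a + g w) := by
      intro b w
      have : (fun m => θ1 * m + θ2 * a + ζ * a * m + g w)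
          = fun m => (θ1 + ζ * a) * m + (θ2 * a + g w) := by
        funext m; ring
      rw [this, key]
    simp only [e2]
    have : (fun w => ((θ1 + ζ * a) * (θ3 * a + h w) + (θ2 * a + g w))
        - ((θ1 + ζ * a) * (θ3 * a' + h w) + (θ2 * a + g w)))
        = fun _ => (θ1 + ζ * a) * θ3 * (a - a') := by
      funext w; ring
    rw [this, integral_const, probReal_univ]
    simp only [ENNReal.toReal_one, one_smul]
    ring
end

section
/- Under the log-linear binary mediator model log P(M=1|A,X,U)=θ3·A+h(X,U) and the linear outcome model E(Y|M,A,X,U)=θ1·M+θ2·A+g(X,U), with A ⊥ U | X, one has E[M·exp(−θ3·A) | A,X] = E[exp(h(X,U))|X] =: h̃(X) almost surely, i.e. it does not depend on A. -/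
open MeasureTheory ProbabilityTheory

section Aux

lemma comap_pair_eq' {Ω α β : Type*} [mα : MeasurableSpace α] [mβ : MeasurableSpace β]
    (f : Ω → α) (g : Ω → β) :
    MeasurableSpace.comap (fun ω => (f ω, g ω)) inferInstance
      = MeasurableSpace.comap f mα ⊔ MeasurableSpace.comap g mβ := by
  show MeasurableSpace.comap (fun ω => (f ω, g ω))
      (mα.comap Prod.fst ⊔ mβ.comap Prod.snd) = _
  rw [MeasurableSpace.comap_sup, MeasurableSpace.comap_comp, MeasurableSpace.comap_comp]
  rfl

lemma comap_triple_eq' {Ω α β γ : Type*} [mα : MeasurableSpace α] [mβ : MeasurableSpace β]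
    [mγ : MeasurableSpace γ] (f : Ω → α) (g : Ω → β) (k : Ω → γ) :
    MeasurableSpace.comap (fun ω => (f ω, g ω, k ω)) inferInstance
      = MeasurableSpace.comap f mα ⊔ (MeasurableSpace.comap g mβ ⊔ MeasurableSpace.comap k mγ) := by
  rw [comap_pair_eq' f (fun ω => (g ω, k ω)), comap_pair_eq' g k]

lemma indicator_inter_one' {Ω : Type*} (s t : Set Ω) :
    (s ∩ t).indicator (fun _ => (1:ℝ))
      = s.indicator (fun _ => (1:ℝ)) * t.indicator (fun _ => (1:ℝ)) := by
  ext ω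
  by_cases hs : ω ∈ s <;> by_cases ht : ω ∈ t <;>
    simp [Set.indicator_apply, hs, ht, Set.mem_inter_iff]

lemma condexp_indicator_inter' {Ω : Type*} {m' : MeasurableSpace Ω} {mΩ : MeasurableSpace Ω}
    (hm' : m' ≤ mΩ) (μ : Measure Ω) [IsFiniteMeasure μ] {s E : Set Ω}
    (hs : MeasurableSet[m'] s) (hE : MeasurableSet E) :
    (μ⟦s ∩ E | m'⟧) =ᵐ[μ] s.indicator (fun _ => (1:ℝ)) * (μ⟦E | m'⟧) := by
  have h1 : (μ⟦s ∩ E | m'⟧)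
      = μ[s.indicator (fun _ => (1:ℝ)) * E.indicator (fun _ => (1:ℝ)) | m'] := by
    rw [indicator_inter_one']
  rw [h1]
  exact condExp_stronglyMeasurable_mul_of_bound hm'
    (stronglyMeasurable_const.indicator hs)
    ((integrable_const (1:ℝ)).indicator hE) 1
    (Filter.Eventually.of_forall fun ω => by
      classical
      rw [Real.norm_eq_abs, Set.indicator_apply]
      split <;> simp)

lemma condIndep_sup' {Ω : Type*} {m' m₁ m₂ : MeasurableSpace Ω} {mΩ : MeasurableSpace Ω}
    [StandardBorelSpace Ω] (hm' : m' ≤ mΩ) (h1 : m₁ ≤ mΩ) (h2 : m₂ ≤ mΩ)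
    (μ : Measure Ω) [IsFiniteMeasure μ]
    (h : CondIndep m' m₁ m₂ hm' μ) : CondIndep m' m₁ (m' ⊔ m₂) hm' μ := by
  have hbase := (condIndep_iff m' m₁ m₂ hm' h1 h2 μ).mp h
  set p1 : Set (Set Ω) := {s | MeasurableSet[m₁] s} with hp1def
  set p2 : Set (Set Ω) :=
    Set.image2 (· ∩ ·) {s | MeasurableSet[m'] s} {s | MeasurableSet[m₂] s} with hp2def
  have hp2m : ∀ s ∈ p2, MeasurableSet[mΩ] s := by
    rintro _ ⟨a, ha, b, hb, rfl⟩
    exact (hm' _ ha).inter (h2 _ hb)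
  have hgen2 : m' ⊔ m₂ = MeasurableSpace.generateFrom p2 := by
    refine le_antisymm (sup_le ?_ ?_) (MeasurableSpace.generateFrom_le ?_)
    · intro s hs
      exact MeasurableSpace.measurableSet_generateFrom
        ⟨s, hs, Set.univ, MeasurableSet.univ, Set.inter_univ s⟩
    · intro s hs
      exact MeasurableSpace.measurableSet_generateFrom
        ⟨Set.univ, MeasurableSet.univ, s, hs, Set.univ_inter s⟩
    · rintro _ ⟨a, ha, b, hb, rfl⟩
      exact ((le_sup_left : m' ≤ m' ⊔ m₂) _ ha).inter ((le_sup_right : m₂ ≤ m' ⊔ m₂) _ hb)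
  refine CondIndepSets.condIndep (p1 := p1) (p2 := p2) h1 (sup_le hm' h2) ?_ ?_
      (@MeasurableSpace.generateFrom_measurableSet Ω m₁).symm hgen2 ?_
  · exact @MeasurableSpace.isPiSystem_measurableSet Ω m₁
  · rintro _ ⟨a1, ha1, b1, hb1, rfl⟩ _ ⟨a2, ha2, b2, hb2, rfl⟩ -
    exact ⟨a1 ∩ a2, ha1.inter ha2, b1 ∩ b2, hb1.inter hb2, by ext ω; simp; tauto⟩
  · refine (condIndepSets_iff m' hm' p1 p2 (fun s hs => h1 s hs) hp2m μ).mpr ?_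
    rintro t1 _ ht1 ⟨a, ha, b, hb, rfl⟩
    have e1 : t1 ∩ (a ∩ b) = a ∩ (t1 ∩ b) := by ext ω; simp; tauto
    have hmul := hbase t1 b ht1 hb
    have hL : (μ⟦t1 ∩ (a ∩ b) | m'⟧)
        =ᵐ[μ] a.indicator (fun _ => (1:ℝ)) * (μ⟦t1 ∩ b | m'⟧) := by
      rw [e1]
      exact condexp_indicator_inter' hm' μ ha ((h1 _ ht1).inter (h2 _ hb))
    have hR : (μ⟦a ∩ b | m'⟧) =ᵐ[μ] a.indicator (fun _ => (1:ℝ)) * (μ⟦b | m'⟧) :=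
      condexp_indicator_inter' hm' μ ha (h2 _ hb)
    filter_upwards [hL, hR, hmul] with ω h1ω h2ω h3ω
    simp only [Pi.mul_apply] at *
    rw [h1ω, h3ω, h2ω]
    ring

lemma setIntegral_eq_of_condIndep' {Ω : Type*}
    {m' m₁ m₂ : MeasurableSpace Ω} {mΩ : MeasurableSpace Ω} [StandardBorelSpace Ω]
    (hm' : m' ≤ mΩ) (h1 : m₁ ≤ mΩ) (h2 : m₂ ≤ mΩ)
    (μ : Measure Ω) [IsProbabilityMeasure μ]
    (h : CondIndep m' m₁ m₂ hm' μ) {a : Set Ω} (ha : MeasurableSet[m₁] a)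
    {W : Ω → ℝ} (hWm : AEStronglyMeasurable[m₂] W μ) (hWi : Integrable W μ) :
    ∫ x in a, W x ∂μ = ∫ x in a, (μ[W | m']) x ∂μ := by
  have haΩ : MeasurableSet a := h1 a ha
  have hbase : ∀ t : Set Ω, MeasurableSet[m₂] t →
      ∫ x in a, t.indicator (fun _ => (1:ℝ)) x ∂μ = ∫ x in a, (μ⟦t | m'⟧) x ∂μ := by
    intro t ht
    have htΩ : MeasurableSet t := h2 t ht
    have hb : ∀ᵐ ω ∂μ, ‖(μ⟦t | m'⟧) ω‖ ≤ 1 := by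
      have h0 : 0 ≤ᵐ[μ] (μ⟦t | m'⟧) :=
        condExp_nonneg (Filter.Eventually.of_forall fun ω =>
          Set.indicator_nonneg (fun _ _ => zero_le_one) ω)
      have h1' : (μ⟦t | m'⟧) ≤ᵐ[μ] μ[(fun _ => (1:ℝ)) | m'] := by
        refine condExp_mono ((integrable_const (1:ℝ)).indicator htΩ) (integrable_const 1) ?_
        exact Filter.Eventually.of_forall fun ω =>
          Set.indicator_le_self' (fun _ _ => zero_le_one) ω
      have hc := condExp_const (μ := μ) hm' (1:ℝ)
      filter_upwards [h0, h1'] with ω hω0 hω1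
      simp only [Pi.zero_apply] at hω0
      rw [Real.norm_eq_abs, abs_le]
      refine ⟨by linarith, ?_⟩
      calc (μ⟦t | m'⟧) ω ≤ (μ[(fun _ => (1:ℝ)) | m']) ω := hω1
        _ = 1 := by rw [hc]
    have key1 : (μ⟦a ∩ t | m'⟧) =ᵐ[μ] (μ⟦a | m'⟧) * (μ⟦t | m'⟧) :=
      (condIndep_iff m' m₁ m₂ hm' h1 h2 μ).mp h a t ha ht
    have key2 : μ[(μ⟦t | m'⟧) * a.indicator (fun _ => (1:ℝ)) | m']
        =ᵐ[μ] (μ⟦t | m'⟧) * μ[a.indicator (fun _ => (1:ℝ)) | m'] :=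
      condExp_stronglyMeasurable_mul_of_bound hm' stronglyMeasurable_condExp
        ((integrable_const (1:ℝ)).indicator haΩ) 1 hb
    have e1 : a.indicator (t.indicator (fun _ => (1:ℝ))) = (a ∩ t).indicator (fun _ => (1:ℝ)) := by
      ext ω
      classical
      by_cases hx : ω ∈ a <;> by_cases hy : ω ∈ t <;>
        simp [Set.indicator_apply, hx, hy]
    calc ∫ x in a, t.indicator (fun _ => (1:ℝ)) x ∂μ
        = ∫ x, a.indicator (t.indicator (fun _ => (1:ℝ))) x ∂μ := (integral_indicator haΩ).symm
      _ = ∫ x, (a ∩ t).indicator (fun _ => (1:ℝ)) x ∂μ := by rw [e1]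
      _ = ∫ x, (μ⟦a ∩ t | m'⟧) x ∂μ := (integral_condExp hm').symm
      _ = ∫ x, ((μ⟦a | m'⟧) * (μ⟦t | m'⟧)) x ∂μ := integral_congr_ae key1
      _ = ∫ x, ((μ⟦t | m'⟧) * (μ⟦a | m'⟧)) x ∂μ := by
          refine integral_congr_ae (Filter.Eventually.of_forall fun ω => ?_)
          simp [mul_comm]
      _ = ∫ x, (μ[(μ⟦t | m'⟧) * a.indicator (fun _ => (1:ℝ)) | m']) x ∂μ :=
          (integral_congr_ae key2).symm
      _ = ∫ x, ((μ⟦t | m'⟧) * a.indicator (fun _ => (1:ℝ))) x ∂μ := integral_condExp hm'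
      _ = ∫ x in a, (μ⟦t | m'⟧) x ∂μ := by
          rw [← integral_indicator haΩ]
          refine integral_congr_ae (Filter.Eventually.of_forall fun ω => ?_)
          classical
          by_cases hx : ω ∈ a <;> simp [Set.indicator_apply, hx]
  have hmain : ∀ ⦃f : Ω → ℝ⦄, MemLp f 1 μ → AEStronglyMeasurable[m₂] f μ →
      ∫ x in a, f x ∂μ = ∫ x in a, (μ[f | m']) x ∂μ := by
    refine MemLp.induction_stronglyMeasurable h2 ENNReal.one_ne_top
      (fun f => ∫ x in a, f x ∂μ = ∫ x in a, (μ[f | m']) x ∂μ) ?_ ?_ ?_ ?_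
    · intro c t ht hμt
      have htΩ : MeasurableSet t := h2 t ht
      have e : t.indicator (fun _ => c) = fun ω => c * t.indicator (fun _ => (1:ℝ)) ω := by
        ext ω
        classical
        by_cases hx : ω ∈ t <;> simp [Set.indicator_apply, hx]
      have hce : μ[t.indicator (fun _ => c) | m'] =ᵐ[μ] fun ω => c * (μ⟦t | m'⟧) ω := by
        have e2 : t.indicator (fun _ => c) = c • t.indicator (fun _ => (1:ℝ)) := by
          ext ω
          classical
          by_cases hx : ω ∈ t <;> simp [Set.indicator_apply, hx]
        rw [e2]
        filter_upwards [condExp_smul (μ := μ) (m := m') c (t.indicator (fun _ => (1:ℝ)))] with ω hω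
        rw [hω]
        simp
      calc ∫ x in a, t.indicator (fun _ => c) x ∂μ
          = ∫ x in a, c * t.indicator (fun _ => (1:ℝ)) x ∂μ := by rw [e]
        _ = c * ∫ x in a, t.indicator (fun _ => (1:ℝ)) x ∂μ := integral_const_mul c _
        _ = c * ∫ x in a, (μ⟦t | m'⟧) x ∂μ := by rw [hbase t ht]
        _ = ∫ x in a, c * (μ⟦t | m'⟧) x ∂μ := (integral_const_mul c _).symm
        _ = ∫ x in a, (μ[t.indicator (fun _ => c) | m']) x ∂μ :=
            (integral_congr_ae (ae_restrict_of_ae hce)).symm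
    · intro f g hdisj hf hg hfm hgm hPf hPg
      have hfi := memLp_one_iff_integrable.mp hf
      have hgi := memLp_one_iff_integrable.mp hg
      calc ∫ x in a, (f + g) x ∂μ
          = ∫ x in a, f x ∂μ + ∫ x in a, g x ∂μ :=
            integral_add hfi.integrableOn hgi.integrableOn
        _ = ∫ x in a, (μ[f | m']) x ∂μ + ∫ x in a, (μ[g | m']) x ∂μ := by rw [hPf, hPg]
        _ = ∫ x in a, ((μ[f | m']) x + (μ[g | m']) x) ∂μ :=
            (integral_add integrable_condExp.integrableOn integrable_condExp.integrableOn).symm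
        _ = ∫ x in a, (μ[f + g | m']) x ∂μ := by
            refine (integral_congr_ae (ae_restrict_of_ae ?_)).symm
            filter_upwards [condExp_add (μ := μ) (m := m') hfi hgi] with ω hω
            rw [hω]
            rfl
    · have heqL : (fun f : lpMeas ℝ ℝ m₂ 1 μ => ∫ x in a, (f : Ω → ℝ) x ∂μ)
          = (fun f : Lp ℝ 1 μ => ∫ x in a, f x ∂μ) ∘ (Submodule.subtypeL _) := by
        refine funext fun f => integral_congr_ae (ae_restrict_of_ae ?_)
        exact Filter.Eventually.of_forall fun _ => rfl
      have heqR : (fun f : lpMeas ℝ ℝ m₂ 1 μ => ∫ x in a, (μ[(f : Ω → ℝ) | m']) x ∂μ)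
          = (fun f : Lp ℝ 1 μ => ∫ x in a, (condExpL1CLM ℝ hm' μ f : Ω → ℝ) x ∂μ)
            ∘ (Submodule.subtypeL _) := by
        refine funext fun f => integral_congr_ae (ae_restrict_of_ae ?_)
        have hint : Integrable (f : Ω → ℝ) μ := L1.integrable_coeFn _
        have := condExp_ae_eq_condExpL1CLM hm' hint
        rw [Integrable.toL1_coeFn _ hint] at this
        exact this
      refine isClosed_eq ?_ ?_
      · rw [heqL]
        exact (continuous_setIntegral a).comp (ContinuousLinearMap.continuous _)
      · rw [heqR]
        exact ((continuous_setIntegral a).comp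
          (ContinuousLinearMap.continuous (condExpL1CLM ℝ hm' μ))).comp
          (ContinuousLinearMap.continuous _)
    · intro f g hfg hf hPf
      have e1 : ∫ x in a, g x ∂μ = ∫ x in a, f x ∂μ :=
        integral_congr_ae (ae_restrict_of_ae hfg.symm)
      have e2 : ∫ x in a, (μ[g | m']) x ∂μ = ∫ x in a, (μ[f | m']) x ∂μ :=
        integral_congr_ae (ae_restrict_of_ae (condExp_congr_ae hfg.symm))
      rw [e1, e2, hPf]
  exact hmain (memLp_one_iff_integrable.mpr hWi) hWm

lemma condexp_sup_of_condIndep' {Ω : Type*}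
    {m' m₁ m₂ : MeasurableSpace Ω} {mΩ : MeasurableSpace Ω} [StandardBorelSpace Ω]
    (hm' : m' ≤ mΩ) (h1 : m₁ ≤ mΩ) (h2 : m₂ ≤ mΩ) (hm'2 : m' ≤ m₂)
    (μ : Measure Ω) [IsProbabilityMeasure μ]
    (h : CondIndep m' m₁ m₂ hm' μ)
    {Z : Ω → ℝ} (hZm : AEStronglyMeasurable[m₂] Z μ) (hZi : Integrable Z μ) :
    μ[Z | m' ⊔ m₁] =ᵐ[μ] μ[Z | m'] := by
  have hsup : m' ⊔ m₁ ≤ mΩ := sup_le hm' h1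
  have key : ∀ ⦃s : Set Ω⦄, MeasurableSet[m' ⊔ m₁] s →
      ∫ x in s, (μ[Z | m']) x ∂μ = ∫ x in s, Z x ∂μ := by
    set p : Set (Set Ω) :=
      Set.image2 (· ∩ ·) {s | MeasurableSet[m'] s} {s | MeasurableSet[m₁] s} with hpdef
    have hgen : (m' ⊔ m₁) = MeasurableSpace.generateFrom p := by
      refine le_antisymm (sup_le ?_ ?_) (MeasurableSpace.generateFrom_le ?_)
      · intro s hs
        exact MeasurableSpace.measurableSet_generateFrom
          ⟨s, hs, Set.univ, MeasurableSet.univ, Set.inter_univ s⟩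
      · intro s hs
        exact MeasurableSpace.measurableSet_generateFrom
          ⟨Set.univ, MeasurableSet.univ, s, hs, Set.univ_inter s⟩
      · rintro _ ⟨x, hx, b, hb, rfl⟩
        exact ((le_sup_left : m' ≤ m' ⊔ m₁) _ hx).inter ((le_sup_right : m₁ ≤ m' ⊔ m₁) _ hb)
    have hpi : IsPiSystem p := by
      rintro _ ⟨x1, hx1, b1, hb1, rfl⟩ _ ⟨x2, hx2, b2, hb2, rfl⟩ -
      exact ⟨x1 ∩ x2, hx1.inter hx2, b1 ∩ b2, hb1.inter hb2, by ext ω; simp; tauto⟩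
    refine MeasurableSpace.induction_on_inter (m := m' ⊔ m₁)
      (C := fun s _ => ∫ x in s, (μ[Z | m']) x ∂μ = ∫ x in s, Z x ∂μ) hgen hpi ?_ ?_ ?_ ?_
    · simp
    · rintro _ ⟨x, hx, a, ha, rfl⟩
      obtain ⟨Z', hZ'm, hZZ'⟩ := hZm
      have hxΩ : MeasurableSet x := hm' x hx
      have hWm : AEStronglyMeasurable[m₂] (x.indicator Z) μ := by
        refine ⟨x.indicator Z', hZ'm.indicator (hm'2 x hx), ?_⟩
        filter_upwards [hZZ'] with ω hω
        classical
        by_cases hmem : ω ∈ x <;> simp [Set.indicator_apply, hmem, hω]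
      have hWi : Integrable (x.indicator Z) μ := hZi.indicator hxΩ
      have hkey := setIntegral_eq_of_condIndep' hm' h1 h2 μ h ha hWm hWi
      have hL : ∫ ω in a, x.indicator Z ω ∂μ = ∫ ω in x ∩ a, Z ω ∂μ := by
        rw [setIntegral_indicator hxΩ, Set.inter_comm]
      have hcond : μ[x.indicator Z | m'] =ᵐ[μ] x.indicator (μ[Z | m']) :=
        condExp_indicator hZi hx
      have hR : ∫ ω in a, (μ[x.indicator Z | m']) ω ∂μ = ∫ ω in x ∩ a, (μ[Z | m']) ω ∂μ := by
        rw [integral_congr_ae (ae_restrict_of_ae hcond), setIntegral_indicator hxΩ,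
          Set.inter_comm]
      rw [← hR, ← hkey, hL]
    · intro t htm hC
      have htΩ : MeasurableSet t := hsup t htm
      rw [setIntegral_compl htΩ integrable_condExp, setIntegral_compl htΩ hZi, hC,
        integral_condExp hm']
    · intro f hd hm hC
      have hmΩ : ∀ i, MeasurableSet (f i) := fun i => hsup _ (hm i)
      rw [integral_iUnion hmΩ hd integrable_condExp.integrableOn,
        integral_iUnion hmΩ hd hZi.integrableOn]
      exact tsum_congr hC
  refine (ae_eq_condExp_of_forall_setIntegral_eq hsup hZi
    (fun s _ _ => integrable_condExp.integrableOn)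
    (fun s hs _ => key hs)
    (((stronglyMeasurable_condExp : StronglyMeasurable[m'] (μ[Z | m'])).mono
      (le_sup_left : m' ≤ m' ⊔ m₁)).aestronglyMeasurable)).symm

end Aux
set_option maxHeartbeats 1000000 in
/-- under the log-linear binary mediator model
`P(M=1|A,X,U) = exp(θ3·A + h(X,U))`, the linear outcome model, and `A ⊥ U | X`,
`E[M·exp(−θ3·A) | A,X] = E[exp(h(X,U))|X] =: h̃(X)` a.s., so it does not depend on `A`. -/
theorem stmt15 {Ω 𝓧 𝓤 : Type*} {mΩ : MeasurableSpace Ω} [StandardBorelSpace Ω] [Nonempty Ω]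
    {m𝓧 : MeasurableSpace 𝓧} {m𝓤 : MeasurableSpace 𝓤}
    (μ : Measure Ω) [IsProbabilityMeasure μ]
    (Y A M : Ω → ℝ) (X : Ω → 𝓧) (U : Ω → 𝓤)
    (hYm : Measurable Y) (hAm : Measurable A) (hMm : Measurable M)
    (hXm : Measurable X) (hUm : Measurable U)
    (hY : Integrable Y μ) (hA : Integrable A μ)
    (hMbin : ∀ᵐ ω ∂μ, M ω = 0 ∨ M ω = 1)
    (θ1 θ2 θ3 : ℝ) (g h : 𝓧 × 𝓤 → ℝ) (hg : Measurable g) (hh : Measurable h)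
    (hgi : Integrable (fun ω => g (X ω, U ω)) μ)
    (hhi : Integrable (fun ω => Real.exp (h (X ω, U ω))) μ)
    (hout : μ[Y | MeasurableSpace.comap (fun ω => (M ω, A ω, X ω, U ω)) inferInstance]
        =ᵐ[μ] fun ω => θ1 * M ω + θ2 * A ω + g (X ω, U ω))
    -- log-linear mediator model: P(M=1|A,X,U) = exp(θ3·A + h(X,U))
    (hmed : μ[M | MeasurableSpace.comap (fun ω => (A ω, X ω, U ω)) inferInstance]
        =ᵐ[μ] fun ω => Real.exp (θ3 * A ω + h (X ω, U ω)))
    (hAU : CondIndepFun (MeasurableSpace.comap X m𝓧) hXm.comap_le A U μ) :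
    μ[fun ω => M ω * Real.exp (-θ3 * A ω)
        | MeasurableSpace.comap (fun ω => (A ω, X ω)) inferInstance]
      =ᵐ[μ] μ[fun ω => Real.exp (h (X ω, U ω)) | MeasurableSpace.comap X m𝓧] := by
  -- notation
  set m' : MeasurableSpace Ω := MeasurableSpace.comap X m𝓧 with hm'def
  set mA : MeasurableSpace Ω := MeasurableSpace.comap A inferInstance with hmAdef
  set mU : MeasurableSpace Ω := MeasurableSpace.comap U m𝓤 with hmUdef
  have hm'le : m' ≤ mΩ := hXm.comap_le
  have hAle : mA ≤ mΩ := hAm.comap_le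
  have hUle : mU ≤ mΩ := hUm.comap_le
  set mG : MeasurableSpace Ω :=
    MeasurableSpace.comap (fun ω => (A ω, X ω, U ω)) inferInstance with hmGdef
  set mAX : MeasurableSpace Ω :=
    MeasurableSpace.comap (fun ω => (A ω, X ω)) inferInstance with hmAXdef
  have hGsup : mG = mA ⊔ (m' ⊔ mU) := comap_triple_eq' A X U
  have hAXsup : mAX = mA ⊔ m' := comap_pair_eq' A X
  have hGle : mG ≤ mΩ := by rw [hGsup]; exact sup_le hAle (sup_le hm'le hUle)
  have hAXleG : mAX ≤ mG := by
    rw [hGsup, hAXsup]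
    exact sup_le_sup_left le_sup_left mA
  have hAXle : mAX ≤ mΩ := hAXleG.trans hGle
  set e : Ω → ℝ := fun ω => Real.exp (-θ3 * A ω) with hedef
  have he_meas : Measurable[mΩ] e := (hAm.const_mul (-θ3)).exp
  have hGA : Measurable[mG] A := by
    have htriple : Measurable[mG] (fun ω => (A ω, X ω, U ω)) :=
      measurable_iff_comap_le.mpr le_rfl
    exact measurable_fst.comp htriple
  have he_measG : Measurable[mG] e := (hGA.const_mul (-θ3)).exp
  have hMint : Integrable M μ := by
    refine (integrable_const (1:ℝ)).mono' hMm.aestronglyMeasurable ?_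
    filter_upwards [hMbin] with ω hω
    rcases hω with h0 | h0 <;> simp [h0]
  -- truncations
  set F : ℕ → Ω → ℝ := fun n => (fun ω => min (e ω) (n:ℝ)) * M with hFdef
  have hFmeas : ∀ n, Measurable[mΩ] (F n) := fun n => (he_meas.min measurable_const).mul hMm
  have hFint : ∀ n, Integrable (F n) μ := by
    intro n
    refine (integrable_const ((n:ℝ))).mono' (hFmeas n).aestronglyMeasurable ?_
    filter_upwards [hMbin] with ω hω
    have hmin0 : 0 ≤ min (e ω) (n:ℝ) := le_min (Real.exp_pos _).le (Nat.cast_nonneg n)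
    have hminn : min (e ω) (n:ℝ) ≤ (n:ℝ) := min_le_right _ _
    rcases hω with h0 | h1
    · simp [hFdef, h0, Nat.cast_nonneg]
    · simp only [hFdef, Pi.mul_apply, h1, mul_one, Real.norm_eq_abs]
      rw [abs_of_nonneg hmin0]
      exact hminn
  have hFnonneg : ∀ n, 0 ≤ᵐ[μ] F n := by
    intro n
    filter_upwards [hMbin] with ω hω
    have hmin0 : 0 ≤ min (e ω) (n:ℝ) := le_min (Real.exp_pos _).le (Nat.cast_nonneg n)
    rcases hω with h0 | h0 <;> simp [hFdef, h0, hmin0]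
  have hcondF : ∀ n, μ[F n | mG] =ᵐ[μ] (fun ω => min (e ω) (n:ℝ)) * μ[M | mG] := fun n =>
    condExp_mul_of_stronglyMeasurable_left ((he_measG.min measurable_const).stronglyMeasurable)
      (hFint n) hMint
  have hFle : ∀ n, μ[F n | mG] ≤ᵐ[μ] fun ω => Real.exp (h (X ω, U ω)) := by
    intro n
    filter_upwards [hcondF n, hmed] with ω h1 h2
    rw [h1]
    simp only [Pi.mul_apply]
    rw [h2]
    calc min (e ω) (n:ℝ) * Real.exp (θ3 * A ω + h (X ω, U ω))
        ≤ e ω * Real.exp (θ3 * A ω + h (X ω, U ω)) :=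
          mul_le_mul_of_nonneg_right (min_le_left _ _) (Real.exp_pos _).le
      _ = Real.exp (h (X ω, U ω)) := by
          rw [hedef, ← Real.exp_add]
          ring_nf
  have hintF : ∀ n, ∫ ω, F n ω ∂μ ≤ ∫ ω, Real.exp (h (X ω, U ω)) ∂μ := by
    intro n
    rw [← integral_condExp hGle (f := F n)]
    exact integral_mono_ae integrable_condExp hhi (hFle n)
  -- integrability of the target function
  have hfi : Integrable (fun ω => M ω * e ω) μ := by
    refine ⟨(hMm.mul he_meas).aestronglyMeasurable, ?_⟩
    have hnn : ∀ᵐ ω ∂μ, 0 ≤ M ω * e ω := by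
      filter_upwards [hMbin] with ω hω
      rcases hω with h0 | h0 <;> simp [h0, hedef, Real.exp_nonneg]
    have hsup_eq : ∀ᵐ ω ∂μ,
        (⨆ n : ℕ, ENNReal.ofReal (F n ω)) = ENNReal.ofReal (M ω * e ω) := by
      filter_upwards [hMbin] with ω hω
      rcases hω with h0 | h1
      · simp [hFdef, h0]
      · simp only [hFdef, Pi.mul_apply, h1, mul_one, one_mul]
        refine le_antisymm (iSup_le fun n => ENNReal.ofReal_le_ofReal (min_le_left _ _)) ?_
        refine le_iSup_of_le ⌈e ω⌉₊ ?_
        rw [min_eq_left (Nat.le_ceil _)]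
    have hMono : Monotone (fun n : ℕ => fun ω => ENNReal.ofReal (F n ω)) := by
      intro n m hnm
      intro ω
      rcases le_or_gt (M ω) 0 with hM0 | hMpos
      · have h1 : F n ω ≤ 0 :=
          mul_nonpos_of_nonneg_of_nonpos (le_min (Real.exp_pos _).le (Nat.cast_nonneg n)) hM0
        simp [ENNReal.ofReal_of_nonpos h1]
      · refine ENNReal.ofReal_le_ofReal ?_
        exact mul_le_mul_of_nonneg_right
          (min_le_min le_rfl (Nat.cast_le.mpr hnm)) hMpos.le
    have hlsup : ∫⁻ ω, ENNReal.ofReal (M ω * e ω) ∂μ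
        ≤ ENNReal.ofReal (∫ ω, Real.exp (h (X ω, U ω)) ∂μ) := by
      rw [← lintegral_congr_ae hsup_eq,
        lintegral_iSup (fun n => (hFmeas n).ennreal_ofReal) hMono]
      refine iSup_le fun n => ?_
      rw [← ofReal_integral_eq_lintegral_ofReal (hFint n) (hFnonneg n)]
      exact ENNReal.ofReal_le_ofReal (hintF n)
    have hnorm : ∀ᵐ ω ∂μ, ‖M ω * e ω‖ₑ = ENNReal.ofReal (M ω * e ω) := by
      filter_upwards [hnn] with ω hω
      exact Real.enorm_eq_ofReal hω
    rw [HasFiniteIntegral, lintegral_congr_ae hnorm]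
    exact lt_of_le_of_lt hlsup ENNReal.ofReal_lt_top
  -- Step A: conditional expectation given (A,X,U)
  have hfi' : Integrable (e * M) μ := by
    refine hfi.congr (Filter.Eventually.of_forall fun ω => ?_)
    simp [mul_comm]
  have hstepA : μ[e * M | mG] =ᵐ[μ] fun ω => Real.exp (h (X ω, U ω)) := by
    have h1 := condExp_mul_of_stronglyMeasurable_left he_measG.stronglyMeasurable hfi' hMint
    refine h1.trans ?_
    filter_upwards [hmed] with ω hω
    simp only [Pi.mul_apply]
    rw [hω, hedef, ← Real.exp_add]
    ring_nf
  -- Step B: tower property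
  have hB : μ[e * M | mAX] =ᵐ[μ] μ[fun ω => Real.exp (h (X ω, U ω)) | mAX] := by
    calc μ[e * M | mAX]
        =ᵐ[μ] μ[μ[e * M | mG] | mAX] := (condExp_condExp_of_le hAXleG hGle).symm
      _ =ᵐ[μ] μ[fun ω => Real.exp (h (X ω, U ω)) | mAX] := condExp_congr_ae hstepA
  -- Step C: conditional independence
  have hCIbase : CondIndep m' mA mU hXm.comap_le μ :=
    (condIndepFun_iff_condIndep (MeasurableSpace.comap X m𝓧) hXm.comap_le A U μ).mp hAU
  have hCI2 : CondIndep m' mA (m' ⊔ mU) hXm.comap_le μ :=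
    condIndep_sup' hXm.comap_le hAle hUle μ hCIbase
  have hZm : AEStronglyMeasurable[m' ⊔ mU] (fun ω => Real.exp (h (X ω, U ω))) μ := by
    have hX' : Measurable[m' ⊔ mU] X := measurable_iff_comap_le.mpr le_sup_left
    have hU' : Measurable[m' ⊔ mU] U := measurable_iff_comap_le.mpr le_sup_right
    exact ((hh.comp (hX'.prodMk hU')).exp).stronglyMeasurable.aestronglyMeasurable
  have hC : μ[fun ω => Real.exp (h (X ω, U ω)) | m' ⊔ mA]
      =ᵐ[μ] μ[fun ω => Real.exp (h (X ω, U ω)) | m'] :=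
    condexp_sup_of_condIndep' hXm.comap_le hAle (sup_le hm'le hUle) le_sup_left μ
      hCI2 hZm hhi
  have hAXsup' : mAX = m' ⊔ mA := by rw [hAXsup, sup_comm]
  have hgoal : μ[e * M | mAX] =ᵐ[μ] μ[fun ω => Real.exp (h (X ω, U ω)) | m'] := by
    rw [hAXsup'] at hB ⊢
    exact hB.trans hC
  refine Filter.EventuallyEq.trans ?_ hgoal
  have : (fun ω => M ω * Real.exp (-θ3 * A ω)) = e * M := by
    funext ω
    simp [hedef, mul_comm]
  rw [this]
end

section
/- Under the log-linear binary mediator model and linear outcome model of the previous statement, with A ⊥ U | X, the mediation functionals satisfy NDE(a,a')=θ2·(a−a') and NIE(a,a')=θ1·(exp(θ3·a)−exp(θ3·a'))·E[h̃(X)], where h̃(X)=E[exp(h(X,U))|X]. -/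
open MeasureTheory ProbabilityTheory

/-- under the log-linear binary mediator model
`P(M=1|a,w) = exp(θ3·a + h(w))` and linear outcome model
`E(Y|m,a,w) = θ1·m + θ2·a + g(w)`, with `ν` the law of `(X,U)`, the mediation
functionals satisfy `NDE(a,a') = θ2·(a−a')` and
`NIE(a,a') = θ1·(exp(θ3·a) − exp(θ3·a'))·E[h̃(X)]` where `E[h̃(X)] = E[exp(h(X,U))]`. -/
theorem stmt16 {𝓦 : Type*} [MeasurableSpace 𝓦]
    (ν : Measure 𝓦) [IsProbabilityMeasure ν]
    (θ1 θ2 θ3 : ℝ) (g h : 𝓦 → ℝ)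
    (hg : Integrable g ν)
    (hhe : Integrable (fun w => Real.exp (h w)) ν)
    (hghe : Integrable (fun w => g w * Real.exp (h w)) ν)
    (a a' : ℝ)
    -- valid probabilities at the exposure levels considered
    (hp : ∀ b ∈ ({a, a'} : Set ℝ), ∀ w, Real.exp (θ3 * b + h w) ≤ 1) :
    -- NDE(a,a') = Σ_m [E(Y|a,m,w) − E(Y|a',m,w)]·P(M=m|a',w) integrated over ν
    (∫ w, (((θ1 * 1 + θ2 * a + g w) - (θ1 * 1 + θ2 * a' + g w))
            * Real.exp (θ3 * a' + h w)
          + ((θ1 * 0 + θ2 * a + g w) - (θ1 * 0 + θ2 * a' + g w))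
            * (1 - Real.exp (θ3 * a' + h w))) ∂ν
      = θ2 * (a - a'))
    -- NIE(a,a') = Σ_m E(Y|a,m,w)·[P(M=m|a,w) − P(M=m|a',w)] integrated over ν
    ∧ (∫ w, ((θ1 * 1 + θ2 * a + g w)
            * (Real.exp (θ3 * a + h w) - Real.exp (θ3 * a' + h w))
          + (θ1 * 0 + θ2 * a + g w)
            * ((1 - Real.exp (θ3 * a + h w)) - (1 - Real.exp (θ3 * a' + h w)))) ∂ν
      = θ1 * (Real.exp (θ3 * a) - Real.exp (θ3 * a')) * ∫ w, Real.exp (h w) ∂ν) := by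
  constructor
  · have : ∀ w, ((θ1 * 1 + θ2 * a + g w) - (θ1 * 1 + θ2 * a' + g w))
            * Real.exp (θ3 * a' + h w)
          + ((θ1 * 0 + θ2 * a + g w) - (θ1 * 0 + θ2 * a' + g w))
            * (1 - Real.exp (θ3 * a' + h w)) = θ2 * (a - a') := by
      intro w; ring
    simp only [this, integral_const, measure_univ, probReal_univ, smul_eq_mul, one_mul]
  · have : ∀ w, (θ1 * 1 + θ2 * a + g w)
            * (Real.exp (θ3 * a + h w) - Real.exp (θ3 * a' + h w))
          + (θ1 * 0 + θ2 * a + g w)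
            * ((1 - Real.exp (θ3 * a + h w)) - (1 - Real.exp (θ3 * a' + h w)))
          = (θ1 * (Real.exp (θ3 * a) - Real.exp (θ3 * a'))) * Real.exp (h w) := by
      intro w
      simp only [Real.exp_add]; ring
    simp only [this]
    rw [integral_const_mul]
end
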